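/- arXiv:1312.0966 — 4 statements merged into one kernel-verified Lean document; each statement's English description precedes it below -/
import Mathlib

section
/- Let N ≥ 3 and let T be a cellular integral (N−2)-cycle in the unit grid τ of ℝ^N. Then for every cellular integral (N−1)-chain U with ∂U = 2T there exists a cellular integral (N−1)-chain U′ with ∂U′ = T and mass U′ ≤ (mass U)/2. Consequently, the minimum mass of a cellular integral (N−1)-chain with boundary T equals half the minimum mass of a cellular integral (N−1)-chain with boundary 2T. -/
open MeasureTheory Metric Set
open scoped ENNReal NNReal

noncomputable section

/-- Euclidean space `ℝ^n`. -/
abbrev Euc (n : ℕ) : Type := EuclideanSpace ℝ (Fin n)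

/-- Index data of a cell of the unit grid of `ℝ^N`: a corner `x ∈ ℤ^N` and a set `S` of
spanning directions. -/
abbrev CellIdx (N : ℕ) : Type := (Fin N → ℤ) × Finset (Fin N)

/-- The cell of the unit grid with corner `x` and spanning directions `S`, i.e. the set
`x + Σ_{i ∈ S} [0,1] eᵢ`. -/
def gridCell (N : ℕ) (x : Fin N → ℤ) (S : Finset (Fin N)) : Set (Euc N) :=
  {y | ∀ i, if i ∈ S then (x i : ℝ) ≤ y i ∧ y i ≤ (x i : ℝ) + 1 else y i = (x i : ℝ)}

/-- A finite set of grid cells is a cellular mod-2 `d`-chain if all its cells are `d`-cells. -/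
def IsCellChain₂ (N d : ℕ) (A : Finset (CellIdx N)) : Prop := ∀ c ∈ A, c.2.card = d

/-- The support of a cellular mod-2 chain: the union of its cells. -/
def cellSupp (N : ℕ) (A : Finset (CellIdx N)) : Set (Euc N) :=
  ⋃ c ∈ A, gridCell N c.1 c.2

/-- A cellular mod-2 `d`-cycle: a cellular `d`-chain such that every `(d-1)`-cell of the grid
is a face of an even number of its cells. -/
def IsCellCycle₂ (N d : ℕ) (A : Finset (CellIdx N)) : Prop :=
  IsCellChain₂ N d A ∧
  ∀ (x : Fin N → ℤ) (S : Finset (Fin N)), S.card = d - 1 →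
    Even {c ∈ (A : Set (CellIdx N)) | gridCell N x S ⊆ gridCell N c.1 c.2}.ncard

/-- Cellular integral chains on the unit grid: finitely supported `ℤ`-valued functions on
the cells of the grid. -/
abbrev CChain (N : ℕ) : Type := CellIdx N →₀ ℤ

/-- Boundary of a single oriented grid cell, with cubical incidence numbers `±1`: for each
spanning direction `s` (with rank `k` in the sorted order of the directions), the top and
bottom faces in direction `s` occur with coefficients `±(-1)^k`. -/
def cbdCell (N : ℕ) (c : CellIdx N) : CChain N :=
  ∑ s ∈ c.2, ((-1 : ℤ) ^ (c.2.filter (· < s)).card) •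
    (Finsupp.single ((fun i => c.1 i + if i = s then 1 else 0), c.2.erase s) (1 : ℤ)
      - Finsupp.single (c.1, c.2.erase s) 1)

/-- Boundary of a cellular integral chain. -/
def cbd (N : ℕ) (T : CChain N) : CChain N := T.sum fun c a => a • cbdCell N c

/-- A cellular integral `d`-chain: supported on `d`-cells. -/
def IsCellChain (N d : ℕ) (T : CChain N) : Prop := ∀ c ∈ T.support, c.2.card = d

/-- Mass of a cellular integral chain: the sum of the absolute values of its coefficients. -/
def cmass (N : ℕ) (T : CChain N) : ℝ := T.sum fun _ a => (a.natAbs : ℝ)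

namespace CH
variable {N : ℕ}

/-- unit vector -/
def eI (N : ℕ) (s : Fin N) : Fin N → ℤ := fun i => if i = s then 1 else 0

def sgn (S : Finset (Fin N)) (s : Fin N) : ℤ := (-1) ^ (S.filter (· < s)).card

lemma sgn_sq (S : Finset (Fin N)) (s : Fin N) : sgn S s * sgn S s = 1 := by
  simp [sgn, ← pow_add]

lemma cbdCell_apply (c d : CellIdx N) :
    (cbdCell N c) d = ∑ s ∈ c.2, sgn c.2 s *
      ((if (c.1 + eI N s, c.2.erase s) = d then 1 else 0)
        - (if (c.1, c.2.erase s) = d then 1 else 0)) := by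
  rw [cbdCell, Finsupp.finset_sum_apply]
  refine Finset.sum_congr rfl fun s hs => ?_
  rw [Finsupp.smul_apply, Finsupp.sub_apply, Finsupp.single_apply, Finsupp.single_apply]
  rfl

lemma cbd_apply (T : CChain N) (d : CellIdx N) :
    (cbd N T) d = ∑ c ∈ T.support, T c * (cbdCell N c) d := by
  rw [cbd, Finsupp.sum, Finsupp.finset_sum_apply]
  refine Finset.sum_congr rfl fun c hc => ?_
  rw [Finsupp.smul_apply, smul_eq_mul]

lemma cbd_eq (T : CChain N) :
    cbd N T = Finsupp.linearCombination ℤ (cbdCell N) T := by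
  rw [cbd, Finsupp.linearCombination_apply]

lemma cbd_add (T T' : CChain N) : cbd N (T + T') = cbd N T + cbd N T' := by
  simp [cbd_eq]

lemma cbd_smul (n : ℤ) (T : CChain N) : cbd N (n • T) = n • cbd N T := by
  simp [cbd_eq]

lemma cbd_single (c : CellIdx N) (a : ℤ) :
    cbd N (Finsupp.single c a) = a • cbdCell N c := by
  simp [cbd_eq]

lemma cbdCell_eq (x : Fin N → ℤ) (S : Finset (Fin N)) :
    cbdCell N (x, S) = ∑ s ∈ S, sgn S s •
      (Finsupp.single (x + eI N s, S.erase s) (1:ℤ) - Finsupp.single (x, S.erase s) 1) := rfl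

lemma filter_lt_erase (S : Finset (Fin N)) (s s' : Fin N) (hs : s ∈ S) (h : s ≠ s') :
    ((S.erase s).filter (· < s')).card
      = (S.filter (· < s')).card - (if s < s' then 1 else 0) := by
  rw [Finset.filter_erase]
  by_cases hlt : s < s'
  · rw [Finset.card_erase_of_mem (by simp [hs, hlt]), if_pos hlt]
  · rw [Finset.erase_eq_of_notMem (by simp [hlt]), if_neg hlt]
    omega

lemma sgn_erase (S : Finset (Fin N)) (s s' : Fin N) (hs : s ∈ S) (h : s ≠ s') :
    sgn (S.erase s) s' = if s < s' then -sgn S s' else sgn S s' := by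
  unfold sgn
  rw [filter_lt_erase S s s' hs h]
  by_cases hlt : s < s'
  · have hmem : s ∈ S.filter (· < s') := by simp [hs, hlt]
    obtain ⟨k, hk⟩ := Nat.exists_eq_succ_of_ne_zero (Finset.card_ne_zero_of_mem hmem)
    rw [if_pos hlt, if_pos hlt, hk, Nat.succ_sub_one, pow_succ]
    ring
  · simp [hlt]

lemma sgn_antisymm (S : Finset (Fin N)) (s s' : Fin N) (hs : s ∈ S) (hs' : s' ∈ S)
    (h : s ≠ s') :
    sgn S s * sgn (S.erase s) s' = -(sgn S s' * sgn (S.erase s') s) := by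
  rcases lt_or_gt_of_ne h with hlt | hgt
  · rw [sgn_erase S s s' hs h, sgn_erase S s' s hs' h.symm, if_pos hlt,
      if_neg (asymm hlt)]
    ring
  · rw [sgn_erase S s s' hs h, sgn_erase S s' s hs' h.symm, if_neg (asymm hgt),
      if_pos hgt]
    ring

lemma sum_erase_antisymm (S : Finset (Fin N)) (g : Fin N → Fin N → CChain N)
    (h : ∀ s ∈ S, ∀ s' ∈ S.erase s, g s s' = - g s' s) :
    ∑ s ∈ S, ∑ s' ∈ S.erase s, g s s' = 0 := by
  have key : ∑ s ∈ S, ∑ s' ∈ S.erase s, g s s'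
      = ∑ s' ∈ S, ∑ s ∈ S.erase s', g s s' := by
    refine Finset.sum_comm' fun a b => ?_
    simp only [Finset.mem_erase]
    constructor
    · rintro ⟨h1, h2, h3⟩; exact ⟨⟨fun hh => h2 hh.symm, h1⟩, h3⟩
    · rintro ⟨⟨h1, h2⟩, h3⟩; exact ⟨h2, fun hh => h1 hh.symm, h3⟩
  have key2 : ∑ s' ∈ S, ∑ s ∈ S.erase s', g s s'
      = - ∑ s ∈ S, ∑ s' ∈ S.erase s, g s s' := by
    rw [← Finset.sum_neg_distrib]
    refine Finset.sum_congr rfl fun s' hs' => ?_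
    rw [← Finset.sum_neg_distrib]
    refine Finset.sum_congr rfl fun s hsm => ?_
    have hsS : s ∈ S := Finset.mem_of_mem_erase hsm
    have hne : s ≠ s' := fun hh => (Finset.mem_erase.mp hsm).1 hh
    have : s' ∈ S.erase s := Finset.mem_erase.mpr ⟨fun hh => hne hh.symm, hs'⟩
    exact h s hsS s' this
  have h0 := key.trans key2
  ext d
  have h1 := congrArg (fun f : CChain N => f d) h0
  simp only [Finsupp.coe_neg, Pi.neg_apply] at h1
  have h2 : ((0 : CChain N)) d = 0 := rfl
  rw [h2]
  linarith [h1]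

lemma cbd_cbdCell (c : CellIdx N) : cbd N (cbdCell N c) = 0 := by
  obtain ⟨x, S⟩ := c
  have step1 : cbd N (cbdCell N (x, S)) = ∑ s ∈ S, sgn S s •
      (cbdCell N (x + eI N s, S.erase s) - cbdCell N (x, S.erase s)) := by
    rw [cbdCell_eq, cbd_eq, map_sum]
    refine Finset.sum_congr rfl fun s hs => ?_
    rw [_root_.map_smul, map_sub, Finsupp.linearCombination_single, Finsupp.linearCombination_single,
      one_smul, one_smul]
  rw [step1]
  have step2 : ∀ s ∈ S, sgn S s •
      (cbdCell N (x + eI N s, S.erase s) - cbdCell N (x, S.erase s))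
      = ∑ s' ∈ S.erase s, (sgn S s * sgn (S.erase s) s') •
        ((Finsupp.single (x + eI N s + eI N s', (S.erase s).erase s') (1:ℤ)
            - Finsupp.single (x + eI N s, (S.erase s).erase s') 1)
          - (Finsupp.single (x + eI N s', (S.erase s).erase s') 1
            - Finsupp.single (x, (S.erase s).erase s') 1)) := by
    intro s hs
    rw [cbdCell_eq, cbdCell_eq, ← Finset.sum_sub_distrib, Finset.smul_sum]
    refine Finset.sum_congr rfl fun s' hs' => ?_
    rw [mul_smul, ← smul_sub]
  rw [Finset.sum_congr rfl step2]
  refine sum_erase_antisymm S _ ?_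
  intro s hs s' hs'
  have hs'S : s' ∈ S := Finset.mem_of_mem_erase hs'
  have hne : s ≠ s' := fun hh => (Finset.mem_erase.mp hs').1 hh.symm
  have hsS' : s ∈ S.erase s' := Finset.mem_erase.mpr ⟨hne, hs⟩
  have hQ : ((Finsupp.single (x + eI N s + eI N s', (S.erase s).erase s') (1:ℤ)
            - Finsupp.single (x + eI N s, (S.erase s).erase s') 1)
          - (Finsupp.single (x + eI N s', (S.erase s).erase s') 1
            - Finsupp.single (x, (S.erase s).erase s') 1))
      = ((Finsupp.single (x + eI N s' + eI N s, (S.erase s').erase s) (1:ℤ)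
            - Finsupp.single (x + eI N s', (S.erase s').erase s) 1)
          - (Finsupp.single (x + eI N s, (S.erase s').erase s) 1
            - Finsupp.single (x, (S.erase s').erase s) 1)) := by
    rw [Finset.erase_right_comm, add_right_comm]
    abel
  rw [hQ, sgn_antisymm S s s' hs hs'S hne, neg_smul]

lemma cbd_cbd (T : CChain N) : cbd N (cbd N T) = 0 := by
  rw [cbd_eq T, Finsupp.linearCombination_apply, Finsupp.sum, cbd_eq, map_sum]
  refine Finset.sum_eq_zero fun c hc => ?_
  rw [_root_.map_smul, ← cbd_eq, cbd_cbdCell, smul_zero]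

lemma cbdCell_apply_zero (x z : Fin N → ℤ) (S D : Finset (Fin N))
    (h : ∀ s ∈ S, S.erase s ≠ D) : cbdCell N (x, S) (z, D) = 0 := by
  rw [cbdCell_apply]
  refine Finset.sum_eq_zero fun s hs => ?_
  have h1 : ((x + eI N s, S.erase s) : CellIdx N) ≠ (z, D) := by
    intro hh; exact h s hs (congrArg Prod.snd hh)
  have h2 : ((x, S.erase s) : CellIdx N) ≠ (z, D) := by
    intro hh; exact h s hs (congrArg Prod.snd hh)
  rw [if_neg h1, if_neg h2]
  ring

lemma erase_eq_unique (S D : Finset (Fin N)) (s s' : Fin N) (hs : s ∈ S)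
    (hD : S.erase s = D) (hs' : s' ∈ S) (hD' : S.erase s' = D) : s' = s := by
  by_contra hne
  have : s' ∈ S.erase s := Finset.mem_erase.mpr ⟨hne, hs'⟩
  rw [hD, ← hD'] at this
  exact (Finset.mem_erase.mp this).1 rfl

lemma cbdCell_apply_face (x z : Fin N → ℤ) (S D : Finset (Fin N)) (s : Fin N)
    (hs : s ∈ S) (hD : S.erase s = D) :
    cbdCell N (x, S) (z, D) = sgn S s *
      ((if x + eI N s = z then 1 else 0) - (if x = z then 1 else 0)) := by
  rw [cbdCell_apply]
  rw [Finset.sum_eq_single_of_mem s hs]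
  · congr 2
    · by_cases h : x + eI N s = z
      · rw [if_pos h, if_pos (by rw [h, hD])]
      · rw [if_neg h, if_neg (fun hh => h (congrArg Prod.fst hh))]
    · by_cases h : x = z
      · rw [if_pos h, if_pos (by rw [h, hD])]
      · rw [if_neg h, if_neg (fun hh => h (congrArg Prod.fst hh))]
  · intro s' hs' hne
    have hD' : S.erase s' ≠ D := fun hh => hne (erase_eq_unique S D s s' hs hD hs' hh)
    rw [if_neg (fun hh => hD' (congrArg Prod.snd hh)),
      if_neg (fun hh => hD' (congrArg Prod.snd hh))]
    ring

def EE (N : ℕ) (j : Fin N) : Finset (Fin N) := Finset.univ.erase j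

def vv (U : CChain N) : CellIdx N → ZMod 2 := fun c => ((U c : ℤ) : ZMod 2)

lemma EE_ne {a b : Fin N} (h : a ≠ b) : EE N a ≠ EE N b := by
  intro hh
  have : b ∈ EE N a := Finset.mem_erase.mpr ⟨fun x => h x.symm, Finset.mem_univ b⟩
  rw [hh] at this
  exact (Finset.mem_erase.mp this).1 rfl

lemma sgn_cast (S : Finset (Fin N)) (s : Fin N) : ((sgn S s : ℤ) : ZMod 2) = 1 := by
  unfold sgn
  push_cast
  rw [show ((-1 : ZMod 2)) = 1 by decide, one_pow]

lemma sum_ite_vv (U : CChain N) (a : CellIdx N) :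
    ∑ c ∈ U.support, (if c = a then vv U c else 0) = vv U a := by
  rw [Finset.sum_ite_eq' U.support a (vv U)]
  by_cases h : a ∈ U.support
  · rw [if_pos h]
  · rw [if_neg h, vv, Finsupp.notMem_support_iff.mp h]
    simp

lemma cycleRel (U : CChain N) (heven : ∀ d : CellIdx N, ((cbd N U d : ℤ) : ZMod 2) = 0)
    (z : Fin N → ℤ) (i0 j : Fin N) (hj : j ≠ i0) :
    vv U (z, EE N i0) + vv U (z - eI N j, EE N i0)
      + vv U (z, EE N j) + vv U (z - eI N i0, EE N j) = 0 := by
  classical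
  set D := (EE N i0).erase j with hDdef
  have hDj : (EE N i0).erase j = D := rfl
  have hDi : (EE N j).erase i0 = D := by
    rw [hDdef, EE, EE, Finset.erase_right_comm]
  have hjmem : j ∈ EE N i0 := Finset.mem_erase.mpr ⟨hj, Finset.mem_univ j⟩
  have himem : i0 ∈ EE N j := Finset.mem_erase.mpr ⟨fun x => hj x.symm, Finset.mem_univ i0⟩
  have percell : ∀ c ∈ U.support, ((U c : ℤ) : ZMod 2) * ((cbdCell N c (z, D) : ℤ) : ZMod 2)
      = (if c = ((z, EE N i0) : CellIdx N) then vv U c else 0)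
        + (if c = ((z - eI N j, EE N i0) : CellIdx N) then vv U c else 0)
        + (if c = ((z, EE N j) : CellIdx N) then vv U c else 0)
        + (if c = ((z - eI N i0, EE N j) : CellIdx N) then vv U c else 0) := by
    rintro ⟨y, S⟩ _
    have hyz : ∀ (s : Fin N), (y + eI N s = z) ↔ (y = z - eI N s) :=
      fun s => (eq_sub_iff_add_eq (a := y) (b := z) (c := eI N s)).symm
    have hEne : EE N i0 ≠ EE N j := EE_ne (fun x => hj x.symm)
    by_cases h1 : S = EE N i0
    · subst h1
      rw [cbdCell_apply_face y z (EE N i0) D j hjmem hDj, Int.cast_mul,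
        sgn_cast, one_mul, Int.cast_sub, apply_ite (fun t : ℤ => (t : ZMod 2)),
        apply_ite (fun t : ℤ => (t : ZMod 2))]
      simp only [Int.cast_one, Int.cast_zero, CharTwo.sub_eq_add, mul_add, mul_ite,
        mul_one, mul_zero, Prod.mk.injEq, hEne, and_true, and_false, if_false, vv,
        hyz j]
      ring
    · by_cases h2 : S = EE N j
      · subst h2
        rw [cbdCell_apply_face y z (EE N j) D i0 himem hDi, Int.cast_mul,
          sgn_cast, one_mul, Int.cast_sub, apply_ite (fun t : ℤ => (t : ZMod 2)),
          apply_ite (fun t : ℤ => (t : ZMod 2))]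
        simp only [Int.cast_one, Int.cast_zero, CharTwo.sub_eq_add, mul_add, mul_ite,
          mul_one, mul_zero, Prod.mk.injEq, Ne.symm hEne, and_true, and_false, if_false,
          vv, hyz i0]
        ring
      · have hz : cbdCell N (y, S) (z, D) = 0 := by
          apply cbdCell_apply_zero
          intro s hsS hcon
          have hSins : S = insert s D := by
            rw [← hcon, Finset.insert_erase hsS]
          have hsD : s ∉ D := by
            rw [← hcon]; exact Finset.notMem_erase s S
          rcases Decidable.em (s = j) with hsj | hsj
          · subst hsj
            exact h1 (by rw [hSins, hDdef, Finset.insert_erase hjmem])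
          · have hsi : s = i0 := by
              by_contra hsi
              exact hsD (Finset.mem_erase.mpr ⟨hsj,
                Finset.mem_erase.mpr ⟨hsi, Finset.mem_univ s⟩⟩)
            subst hsi
            exact h2 (by rw [hSins, ← hDi, Finset.insert_erase himem])
        rw [hz]
        have hn1 : ¬ ((y, S) : CellIdx N) = (z, EE N i0) := by
          intro hh; exact h1 (congrArg Prod.snd hh)
        have hn2 : ¬ ((y, S) : CellIdx N) = (z - eI N j, EE N i0) := by
          intro hh; exact h1 (congrArg Prod.snd hh)
        have hn3 : ¬ ((y, S) : CellIdx N) = (z, EE N j) := by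
          intro hh; exact h2 (congrArg Prod.snd hh)
        have hn4 : ¬ ((y, S) : CellIdx N) = (z - eI N i0, EE N j) := by
          intro hh; exact h2 (congrArg Prod.snd hh)
        rw [if_neg hn1, if_neg hn2, if_neg hn3, if_neg hn4]
        simp
  have h0 := heven (z, D)
  rw [cbd_apply] at h0
  push_cast at h0
  rw [Finset.sum_congr rfl percell] at h0
  simp only [Finset.sum_add_distrib, sum_ite_vv] at h0
  exact h0

lemma telescope (g : ℤ → ZMod 2) (a b : ℤ) (hab : a ≤ b) :
    ∑ t ∈ Finset.Ico a b, (g t + g (t-1)) = g (b-1) + g (a-1) := by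
  refine Int.le_induction
    (motive := fun b _ => ∑ t ∈ Finset.Ico a b, (g t + g (t-1)) = g (b-1) + g (a-1)) ?_ ?_ b hab
  · show ∑ t ∈ Finset.Ico a a, (g t + g (t-1)) = g (a-1) + g (a-1)
    rw [Finset.Ico_self, Finset.sum_empty]
    exact (show ∀ u : ZMod 2, 0 = u + u by decide) _
  · intro n hn ih
    show ∑ t ∈ Finset.Ico a (n+1), (g t + g (t-1)) = g (n+1-1) + g (a-1)
    have hins : Finset.Ico a (n+1) = insert n (Finset.Ico a n) := by
      ext t; simp only [Finset.mem_Ico, Finset.mem_insert]; omega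
    rw [hins, Finset.sum_insert (by simp), ih]
    have h1 : n + 1 - 1 = n := by ring
    rw [h1]
    exact (show ∀ p q r : ZMod 2, (p + q) + (q + r) = p + r by decide) _ _ _

lemma card_to_erase (D : Finset (Fin N)) (h : D.card = N - 1) (hN : 1 ≤ N) :
    ∃ s : Fin N, D = Finset.univ.erase s := by
  have hsub : D ⊆ Finset.univ := Finset.subset_univ D
  have hcard : (Finset.univ \ D).card = 1 := by
    rw [Finset.card_sdiff_of_subset hsub, Finset.card_univ, Fintype.card_fin, h]
    omega
  obtain ⟨s, hs⟩ := Finset.card_eq_one.mp hcard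
  refine ⟨s, ?_⟩
  have := Finset.sdiff_sdiff_eq_self hsub
  rw [← this, hs, Finset.sdiff_singleton_eq_erase]

lemma exists_W (hN : 3 ≤ N) (U : CChain N) (hU : IsCellChain N (N-1) U)
    (heven : ∀ d : CellIdx N, ((cbd N U d : ℤ) : ZMod 2) = 0) :
    ∃ Wb : CChain N,
      cbd N Wb = 0 ∧
      (∀ d, ((Wb d : ℤ) : ZMod 2) = ((U d : ℤ) : ZMod 2)) ∧
      (∀ d, |Wb d| ≤ 1) ∧
      (∀ d, Wb d ≠ 0 → d.2.card = N - 1) := by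
  classical
  have hNpos : 0 < N := by omega
  set i0 : Fin N := ⟨0, hNpos⟩ with hi0
  set M : ℤ := ((U.support.sup fun c => Finset.univ.sup fun i => (c.1 i).natAbs : ℕ) : ℤ) + 2
    with hMdef
  have hM2 : 2 ≤ M := by rw [hMdef]; omega
  have hMbound : ∀ c ∈ U.support, ∀ i : Fin N, |c.1 i| + 2 ≤ M := by
    intro c hc i
    have h1 : (c.1 i).natAbs ≤ Finset.univ.sup fun i => (c.1 i).natAbs :=
      Finset.le_sup (f := fun i => (c.1 i).natAbs) (Finset.mem_univ i)
    have h2 : (Finset.univ.sup fun i => (c.1 i).natAbs)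
        ≤ U.support.sup fun c => Finset.univ.sup fun i => (c.1 i).natAbs :=
      Finset.le_sup (f := fun c => Finset.univ.sup fun i => (c.1 i).natAbs) hc
    have habs : |c.1 i| = ((c.1 i).natAbs : ℤ) := Int.abs_eq_natAbs _
    rw [hMdef]
    omega
  have hv0 : ∀ (c : CellIdx N), (∃ i, M - 1 ≤ |c.1 i|) → vv U c = 0 := by
    rintro c ⟨i, hci⟩
    rw [vv]
    by_cases hc : c ∈ U.support
    · exfalso; have := hMbound c hc i; omega
    · rw [Finsupp.notMem_support_iff.mp hc]; simp
  set F : (Fin N → ℤ) → ZMod 2 := fun x =>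
    ∑ t ∈ Finset.Ico (x i0 + 1) M, vv U (Function.update x i0 t, EE N i0) with hF
  have hupdate_sub_i0 : ∀ (x : Fin N → ℤ) (t : ℤ),
      Function.update (x - eI N i0) i0 t = Function.update x i0 t := by
    intro x t; funext i
    by_cases h : i = i0
    · subst h; rw [Function.update_self, Function.update_self]
    · rw [Function.update_of_ne h, Function.update_of_ne h]
      simp [eI, h]
  have hupdate_sub_j : ∀ (x : Fin N → ℤ) (j : Fin N), j ≠ i0 → ∀ t : ℤ,
      Function.update (x - eI N j) i0 t = Function.update x i0 t - eI N j := by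
    intro x j hj t; funext i
    have hij : i0 ≠ j := fun hh => hj hh.symm
    by_cases h : i = i0
    · subst h
      rw [Pi.sub_apply, Function.update_self, Function.update_self]
      simp [eI, hij]
    · rw [Pi.sub_apply, Function.update_of_ne h, Pi.sub_apply, Function.update_of_ne h]
  have hupdate_pred : ∀ (x : Fin N → ℤ) (t : ℤ),
      Function.update x i0 t - eI N i0 = Function.update x i0 (t-1) := by
    intro x t; funext i
    by_cases h : i = i0
    · subst h
      rw [Pi.sub_apply, Function.update_self, Function.update_self]
      simp [eI]
    · rw [Pi.sub_apply, Function.update_of_ne h, Function.update_of_ne h]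
      simp [eI, h]
  have hL2 : ∀ x : Fin N → ℤ, F x + F (x - eI N i0) = vv U (x, EE N i0) := by
    intro x
    have hxi : (x - eI N i0) i0 = x i0 - 1 := by simp [eI]
    have hFx' : F (x - eI N i0)
        = ∑ t ∈ Finset.Ico (x i0) M, vv U (Function.update x i0 t, EE N i0) := by
      rw [hF]
      simp only [hupdate_sub_i0, hxi]
      congr 1
      ext t; simp only [Finset.mem_Ico]; omega
    by_cases hlt : x i0 < M
    · have hins : Finset.Ico (x i0) M = insert (x i0) (Finset.Ico (x i0 + 1) M) := by
        ext t; simp only [Finset.mem_Ico, Finset.mem_insert]; omega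
      rw [hFx', hins, Finset.sum_insert (by simp), Function.update_eq_self]
      exact (show ∀ a b : ZMod 2, a + (b + a) = b by decide) _ _
    · have he1 : Finset.Ico (x i0 + 1) M = ∅ := by
        ext t; simp only [Finset.mem_Ico, Finset.notMem_empty, iff_false]; omega
      have he2 : Finset.Ico (x i0) M = ∅ := by
        ext t; simp only [Finset.mem_Ico, Finset.notMem_empty, iff_false]; omega
      rw [hFx', he2, Finset.sum_empty, hF]
      simp only [he1, Finset.sum_empty, add_zero]
      refine (hv0 _ ⟨i0, ?_⟩).symm
      show M - 1 ≤ |x i0|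
      rw [abs_of_nonneg (by omega)]
      omega
  have hL3 : ∀ (x : Fin N → ℤ) (j : Fin N), j ≠ i0 →
      F x + F (x - eI N j) = vv U (x, EE N j) := by
    intro x j hj
    have hij : i0 ≠ j := fun hh => hj hh.symm
    have hxj : (x - eI N j) i0 = x i0 := by
      simp [eI, hij]
    have hFx' : F (x - eI N j)
        = ∑ t ∈ Finset.Ico (x i0 + 1) M,
            vv U (Function.update x i0 t - eI N j, EE N i0) := by
      rw [hF]
      simp only [hupdate_sub_j x j hj, hxj]
    by_cases hlt : x i0 + 1 ≤ M
    · rw [hFx', hF]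
      simp only
      rw [← Finset.sum_add_distrib]
      have hper : ∀ t ∈ Finset.Ico (x i0 + 1) M,
          vv U (Function.update x i0 t, EE N i0)
            + vv U (Function.update x i0 t - eI N j, EE N i0)
          = (fun u => vv U (Function.update x i0 u, EE N j)) t
            + (fun u => vv U (Function.update x i0 u, EE N j)) (t - 1) := by
        intro t _
        have hc := cycleRel U heven (Function.update x i0 t) i0 j hj
        rw [hupdate_pred] at hc
        exact (show ∀ a b c d : ZMod 2, a+b+c+d = 0 → a + b = c + d by decide) _ _ _ _ hc
      rw [Finset.sum_congr rfl hper, telescope _ _ _ hlt]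
      have hg1 : vv U (Function.update x i0 (M-1), EE N j) = 0 := by
        refine hv0 _ ⟨i0, ?_⟩
        show M - 1 ≤ |Function.update x i0 (M-1) i0|
        rw [Function.update_self, abs_of_nonneg (by omega)]
      have hg2 : x i0 + 1 - 1 = x i0 := by ring
      rw [hg1, hg2, Function.update_eq_self, zero_add]
    · have he1 : Finset.Ico (x i0 + 1) M = ∅ := by
        ext t; simp only [Finset.mem_Ico, Finset.notMem_empty, iff_false]; omega
      rw [hFx', hF]
      simp only [he1, Finset.sum_empty, add_zero]
      refine (hv0 _ ⟨i0, ?_⟩).symm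
      show M - 1 ≤ |x i0|
      rw [abs_of_nonneg (by omega)]
      omega
  have hF0a : ∀ x : Fin N → ℤ, (∃ i, i ≠ i0 ∧ M ≤ |x i|) → F x = 0 := by
    rintro x ⟨i, hi, hxi⟩
    rw [hF]
    refine Finset.sum_eq_zero fun t _ => ?_
    refine hv0 _ ⟨i, ?_⟩
    show M - 1 ≤ |Function.update x i0 t i|
    rw [Function.update_of_ne hi]
    omega
  have hF0b : ∀ x : Fin N → ℤ, M ≤ x i0 → F x = 0 := by
    intro x hx
    rw [hF]
    simp only
    rw [show Finset.Ico (x i0 + 1) M = ∅ by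
      ext t; simp only [Finset.mem_Ico, Finset.notMem_empty, iff_false]; omega]
    exact Finset.sum_empty
  have hF0c : ∀ x : Fin N → ℤ, x i0 ≤ -M → F x = 0 := by
    intro x hx
    set j : Fin N := ⟨1, by omega⟩ with hjdef
    have hj : j ≠ i0 := by
      intro hh
      have := congrArg Fin.val hh
      simp [hjdef, hi0] at this
    have hstep : ∀ y : Fin N → ℤ, y i0 = x i0 → F y = F (y - eI N j) := by
      intro y hy
      have h3 := hL3 y j hj
      have hvz : vv U (y, EE N j) = 0 := by
        refine hv0 _ ⟨i0, ?_⟩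
        show M - 1 ≤ |y i0|
        rw [hy, abs_of_nonpos (by omega)]
        omega
      rw [hvz] at h3
      exact (show ∀ a b : ZMod 2, a + b = 0 → a = b by decide) _ _ h3
    have hiter : ∀ k : ℕ, F x = F (x - (k : ℤ) • eI N j) := by
      intro k
      induction k with
      | zero => simp
      | succ n ih =>
        rw [ih, hstep (x - (n : ℤ) • eI N j)
          (by have hij : i0 ≠ j := fun hh => hj hh.symm; simp [eI, hij])]
        congr 1
        push_cast
        funext i
        simp only [Pi.sub_apply, Pi.smul_apply, smul_eq_mul]
        ring
    set k : ℕ := (x j + M).toNat with hk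
    rw [hiter k]
    refine hF0a _ ⟨j, hj, ?_⟩
    have h1 : (x - (k : ℤ) • eI N j) j = x j - k := by
      simp [eI]
    have h2 : x j + M ≤ (k : ℤ) := Int.self_le_toNat _
    rw [h1, abs_of_nonpos (by omega)]
    omega
  have hFbox : ∀ x : Fin N → ℤ, F x ≠ 0 → ∀ i, |x i| < M := by
    intro x hx i
    by_contra hge
    push_neg at hge
    by_cases hi : i = i0
    · rw [hi] at hge
      rcases abs_cases (x i0) with ⟨he, _⟩ | ⟨he, _⟩
      · exact hx (hF0b x (by omega))
      · exact hx (hF0c x (by omega))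
    · exact hx (hF0a x ⟨i, hi, hge⟩)
  set w : (Fin N → ℤ) → ℤ := fun x => if F x = 0 then 0 else 1 with hw
  have hwcast : ∀ x, ((w x : ℤ) : ZMod 2) = F x := by
    intro x
    by_cases h : F x = 0
    · simp [hw, h]
    · have h1 : F x = 1 := by
        revert h; generalize F x = A; revert A; decide
      simp [hw, h, h1]
  have hw01 : ∀ x, 0 ≤ w x ∧ w x ≤ 1 := by
    intro x; by_cases h : F x = 0 <;> simp [hw, h]
  set Box : Finset (Fin N → ℤ) :=
    Fintype.piFinset (fun _ : Fin N => Finset.Icc (-M) M) with hBox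
  have hwBox : ∀ x, x ∉ Box → w x = 0 := by
    intro x hx
    rw [hw]
    simp only
    rw [if_pos]
    by_contra hFx
    refine hx ?_
    rw [hBox, Fintype.mem_piFinset]
    intro i
    have := hFbox x hFx i
    rcases abs_cases (x i) with ⟨he, _⟩ | ⟨he, _⟩ <;>
      (rw [Finset.mem_Icc]; omega)
  set W : CChain N := ∑ x ∈ Box, Finsupp.single (x, (Finset.univ : Finset (Fin N))) (w x)
    with hW
  have hcbdWsum : cbd N W = ∑ x ∈ Box, w x • cbdCell N (x, (Finset.univ : Finset (Fin N))) := by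
    rw [hW, cbd_eq, map_sum]
    exact Finset.sum_congr rfl fun x _ => by rw [Finsupp.linearCombination_single]
  have hcbdW : ∀ (d : CellIdx N) (s : Fin N), d.2 = Finset.univ.erase s →
      cbd N W d = sgn Finset.univ s * (w (d.1 - eI N s) - w d.1) := by
    intro d s hd
    obtain ⟨z, D⟩ := d
    simp only at hd ⊢
    subst hd
    rw [hcbdWsum, Finsupp.finset_sum_apply]
    have hper : ∀ x ∈ Box, (w x • cbdCell N (x, (Finset.univ : Finset (Fin N))))
          ((z, Finset.univ.erase s) : CellIdx N)
        = sgn Finset.univ s * ((if x = z - eI N s then w x else 0) - (if x = z then w x else 0)) := by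
      intro x _
      rw [Finsupp.smul_apply, cbdCell_apply_face x z Finset.univ (Finset.univ.erase s) s
        (Finset.mem_univ s) rfl, smul_eq_mul]
      have hcond : (x + eI N s = z) = (x = z - eI N s) :=
        propext (eq_sub_iff_add_eq (a := x) (b := z) (c := eI N s)).symm
      simp only [hcond]
      rw [show (if x = z - eI N s then (w x : ℤ) else 0)
            = w x * (if x = z - eI N s then 1 else 0) by rw [mul_ite, mul_one, mul_zero],
        show (if x = z then (w x : ℤ) else 0)
            = w x * (if x = z then 1 else 0) by rw [mul_ite, mul_one, mul_zero]]
      ring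
    rw [Finset.sum_congr rfl hper, ← Finset.mul_sum, Finset.sum_sub_distrib,
      Finset.sum_ite_eq' Box (z - eI N s) w, Finset.sum_ite_eq' Box z w]
    congr 2
    · by_cases h : z - eI N s ∈ Box
      · rw [if_pos h]
      · rw [if_neg h, hwBox _ h]
    · by_cases h : z ∈ Box
      · rw [if_pos h]
      · rw [if_neg h, hwBox _ h]
  have hcbdW0 : ∀ d : CellIdx N, (¬ ∃ s, d.2 = Finset.univ.erase s) → cbd N W d = 0 := by
    intro d hns
    obtain ⟨z, D⟩ := d
    rw [hcbdWsum, Finsupp.finset_sum_apply]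
    refine Finset.sum_eq_zero fun x _ => ?_
    rw [Finsupp.smul_apply, cbdCell_apply_zero x z Finset.univ D
      (fun s hs hc => hns ⟨s, hc.symm⟩), smul_zero]
  refine ⟨cbd N W, cbd_cbd W, ?_, ?_, ?_⟩
  · intro d
    by_cases hex : ∃ s, d.2 = Finset.univ.erase s
    · obtain ⟨s, hs⟩ := hex
      obtain ⟨z, D⟩ := d
      have hs' : D = Finset.univ.erase s := hs
      subst hs'
      rw [hcbdW (z, Finset.univ.erase s) s rfl, Int.cast_mul, sgn_cast, one_mul,
        Int.cast_sub, hwcast, hwcast, CharTwo.sub_eq_add]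
      by_cases hsi : s = i0
      · subst hsi
        rw [add_comm]
        exact hL2 z
      · rw [add_comm]
        exact hL3 z s hsi
    · rw [hcbdW0 d hex]
      have hd0 : U d = 0 := by
        by_contra hU0
        have hcard := hU d (Finsupp.mem_support_iff.mpr hU0)
        exact hex (card_to_erase d.2 hcard (by omega))
      rw [hd0]
  · intro d
    by_cases hex : ∃ s, d.2 = Finset.univ.erase s
    · obtain ⟨s, hs⟩ := hex
      rw [hcbdW d s hs, abs_mul]
      have h1 : |sgn Finset.univ s| = 1 := by
        rw [sgn, abs_pow, abs_neg, abs_one, one_pow]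
      rw [h1, one_mul]
      have h2 := hw01 (d.1 - eI N s)
      have h3 := hw01 d.1
      rw [abs_le]
      omega
    · rw [hcbdW0 d hex]
      simp
  · intro d hd
    by_cases hex : ∃ s, d.2 = Finset.univ.erase s
    · obtain ⟨s, hs⟩ := hex
      rw [hs, Finset.card_erase_of_mem (Finset.mem_univ s), Finset.card_univ,
        Fintype.card_fin]
    · exact absurd (hcbdW0 d hex) hd


lemma cbd_sub (T T' : CChain N) : cbd N (T - T') = cbd N T - cbd N T' := by
  simp [cbd_eq]

lemma cmass_eq_sum (T : CChain N) (s : Finset (CellIdx N)) (h : T.support ⊆ s) :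
    cmass N T = ∑ c ∈ s, (((T c).natAbs : ℝ)) := by
  rw [cmass, Finsupp.sum_of_support_subset T h _ (fun i _ => by simp)]

lemma cmass_nonneg (T : CChain N) : 0 ≤ cmass N T := by
  rw [cmass_eq_sum T T.support subset_rfl]
  positivity

lemma halving (hN : 3 ≤ N) (T U : CChain N) (hU : IsCellChain N (N-1) U)
    (hbd : cbd N U = 2 • T) :
    ∃ U' : CChain N, IsCellChain N (N-1) U' ∧ cbd N U' = T ∧
      cmass N U' ≤ cmass N U / 2 := by
  classical
  have h2T : ∀ d, (2 • T) d = T d + T d := by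
    intro d; rw [two_smul, Finsupp.add_apply]
  have heven : ∀ d : CellIdx N, ((cbd N U d : ℤ) : ZMod 2) = 0 := by
    intro d
    rw [hbd, h2T d]
    push_cast
    exact (show ∀ a : ZMod 2, a + a = 0 by decide) _
  obtain ⟨Wb, hWb0, hWbpar, hWb1, hWbdim⟩ := exists_W hN U hU heven
  have hzmod : ∀ a : ZMod 2, a + a = 0 := by decide
  have hdvdP : ∀ d, (2:ℤ) ∣ (U d + Wb d) := by
    intro d
    have h := hWbpar d
    have hc : (((U d + Wb d : ℤ)) : ZMod 2) = 0 := by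
      push_cast
      rw [h]
      exact hzmod _
    exact_mod_cast (ZMod.intCast_zmod_eq_zero_iff_dvd _ 2).mp hc
  have hdvdM : ∀ d, (2:ℤ) ∣ (U d - Wb d) := by
    intro d
    have := hdvdP d
    omega
  set A : CChain N := (U + Wb).mapRange (· / 2) (by norm_num) with hA
  set B : CChain N := (U - Wb).mapRange (· / 2) (by norm_num) with hB
  have hAd : ∀ d, A d = (U d + Wb d) / 2 := fun d => by
    rw [hA, Finsupp.mapRange_apply, Finsupp.add_apply]
  have hBd : ∀ d, B d = (U d - Wb d) / 2 := fun d => by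
    rw [hB, Finsupp.mapRange_apply, Finsupp.sub_apply]
  have hcbdA : cbd N A = T := by
    have h2A : A + A = U + Wb := by
      ext d
      rw [Finsupp.add_apply, Finsupp.add_apply, hAd]
      have := hdvdP d
      omega
    have h1 : cbd N A + cbd N A = cbd N (U + Wb) := by rw [← cbd_add, h2A]
    rw [cbd_add, hWb0, add_zero, hbd] at h1
    ext d
    have h3 := congrArg (fun f : CChain N => f d) h1
    simp only [Finsupp.add_apply] at h3
    rw [h2T d] at h3
    omega
  have hcbdB : cbd N B = T := by
    have h2B : B + B = U - Wb := by
      ext d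
      rw [Finsupp.add_apply, Finsupp.sub_apply, hBd]
      have := hdvdM d
      omega
    have h1 : cbd N B + cbd N B = cbd N (U - Wb) := by rw [← cbd_add, h2B]
    rw [cbd_sub, hWb0, sub_zero, hbd] at h1
    ext d
    have h3 := congrArg (fun f : CChain N => f d) h1
    simp only [Finsupp.add_apply] at h3
    rw [h2T d] at h3
    omega
  have hAdim : IsCellChain N (N-1) A := by
    intro c hc
    have hc' : A c ≠ 0 := Finsupp.mem_support_iff.mp hc
    rw [hAd] at hc'
    have hor : U c ≠ 0 ∨ Wb c ≠ 0 := by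
      by_contra hcon
      push_neg at hcon
      rw [hcon.1, hcon.2] at hc'
      norm_num at hc'
    rcases hor with h | h
    · exact hU c (Finsupp.mem_support_iff.mpr h)
    · exact hWbdim c h
  have hBdim : IsCellChain N (N-1) B := by
    intro c hc
    have hc' : B c ≠ 0 := Finsupp.mem_support_iff.mp hc
    rw [hBd] at hc'
    have hor : U c ≠ 0 ∨ Wb c ≠ 0 := by
      by_contra hcon
      push_neg at hcon
      rw [hcon.1, hcon.2] at hc'
      norm_num at hc'
    rcases hor with h | h
    · exact hU c (Finsupp.mem_support_iff.mpr h)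
    · exact hWbdim c h
  set sFin : Finset (CellIdx N) := (U.support ∪ A.support) ∪ B.support with hsFin
  have hUs : U.support ⊆ sFin := by
    intro c hc; rw [hsFin]; simp [hc]
  have hAs : A.support ⊆ sFin := by
    intro c hc; rw [hsFin]; simp [hc]
  have hBs : B.support ⊆ sFin := by
    intro c hc; rw [hsFin]; simp [hc]
  have hmass : cmass N A + cmass N B = cmass N U := by
    rw [cmass_eq_sum A sFin hAs, cmass_eq_sum B sFin hBs, cmass_eq_sum U sFin hUs,
      ← Finset.sum_add_distrib]
    refine Finset.sum_congr rfl fun c _ => ?_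
    rw [hAd, hBd]
    have h1 := hdvdP c
    have h2 := hWb1 c
    rw [abs_le] at h2
    have h3 : (((U c + Wb c)/2).natAbs + ((U c - Wb c)/2).natAbs) = (U c).natAbs := by
      omega
    rw [← Nat.cast_add, h3]
  by_cases hc : cmass N A ≤ cmass N U / 2
  · exact ⟨A, hAdim, hcbdA, hc⟩
  · refine ⟨B, hBdim, hcbdB, by linarith⟩

lemma double_chain (T U : CChain N) (hU : IsCellChain N (N-1) U)
    (hbd : cbd N U = T) :
    IsCellChain N (N-1) (U + U) ∧ cbd N (U + U) = 2 • T ∧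
      cmass N (U + U) = 2 * cmass N U := by
  refine ⟨?_, ?_, ?_⟩
  · intro c hc
    have := Finsupp.support_add (g₁ := U) (g₂ := U) hc
    rw [Finset.union_self] at this
    exact hU c this
  · rw [cbd_add, hbd, two_smul]
  · have hsub : (U + U).support ⊆ U.support := by
      intro c hc
      have := Finsupp.support_add (g₁ := U) (g₂ := U) hc
      rwa [Finset.union_self] at this
    rw [cmass_eq_sum (U + U) U.support hsub, cmass_eq_sum U U.support subset_rfl,
      Finset.mul_sum]
    refine Finset.sum_congr rfl fun c _ => ?_
    rw [Finsupp.add_apply]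
    have : (U c + U c).natAbs = 2 * (U c).natAbs := by omega
    rw [this]
    push_cast
    ring

end CH

/-- Let `N ≥ 3` and let `T` be a cellular integral `(N-2)`-cycle in the unit
grid of `ℝ^N`.  For every cellular integral `(N-1)`-chain `U` with `∂U = 2T` there is a
cellular integral `(N-1)`-chain `U'` with `∂U' = T` and `mass U' ≤ (mass U)/2`; consequently
the minimal filling mass of `T` is half that of `2T`. -/


theorem codimension_one_halving (N : ℕ) (hN : 3 ≤ N) (T : CChain N)
    (hTdim : IsCellChain N (N - 2) T) (hTcyc : cbd N T = 0) :
    (∀ U : CChain N, IsCellChain N (N - 1) U → cbd N U = 2 • T →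
      ∃ U' : CChain N, IsCellChain N (N - 1) U' ∧ cbd N U' = T ∧
        cmass N U' ≤ cmass N U / 2) ∧
    sInf {m : ℝ | ∃ U : CChain N, IsCellChain N (N - 1) U ∧ cbd N U = T ∧ cmass N U = m} =
      sInf {m : ℝ | ∃ U : CChain N, IsCellChain N (N - 1) U ∧ cbd N U = 2 • T ∧
        cmass N U = m} / 2 := by
  constructor
  · exact fun U hU hbd => CH.halving hN T U hU hbd
  · set S1 : Set ℝ :=
      {m : ℝ | ∃ U : CChain N, IsCellChain N (N - 1) U ∧ cbd N U = T ∧ cmass N U = m}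
      with hS1def
    set S2 : Set ℝ :=
      {m : ℝ | ∃ U : CChain N, IsCellChain N (N - 1) U ∧ cbd N U = 2 • T ∧ cmass N U = m}
      with hS2def
    have hhalf : ∀ m ∈ S2, ∃ m' ∈ S1, m' ≤ m / 2 := by
      rintro m ⟨U, hU, hbd, rfl⟩
      obtain ⟨U', hU', hbd', hle'⟩ := CH.halving hN T U hU hbd
      exact ⟨cmass N U', ⟨U', hU', hbd', rfl⟩, hle'⟩
    have hdbl : ∀ m ∈ S1, 2 * m ∈ S2 := by
      rintro m ⟨U, hU, hbd, rfl⟩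
      obtain ⟨h1, h2, h3⟩ := CH.double_chain T U hU hbd
      exact ⟨U + U, h1, h2, h3⟩
    have hnn1 : ∀ m ∈ S1, (0:ℝ) ≤ m := by
      rintro m ⟨U, _, _, rfl⟩; exact CH.cmass_nonneg U
    have hnn2 : ∀ m ∈ S2, (0:ℝ) ≤ m := by
      rintro m ⟨U, _, _, rfl⟩; exact CH.cmass_nonneg U
    by_cases hS2 : S2.Nonempty
    · have hS1 : S1.Nonempty := by
        obtain ⟨m, hm⟩ := hS2
        obtain ⟨m', hm', _⟩ := hhalf m hm
        exact ⟨m', hm'⟩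
      have hb1 : BddBelow S1 := ⟨0, fun m hm => hnn1 m hm⟩
      have hb2 : BddBelow S2 := ⟨0, fun m hm => hnn2 m hm⟩
      have hle : 2 * sInf S1 ≤ sInf S2 := by
        refine le_csInf hS2 ?_
        intro m hm
        obtain ⟨m', hm', hle'⟩ := hhalf m hm
        have := csInf_le hb1 hm'
        linarith
      have hge : sInf S2 / 2 ≤ sInf S1 := by
        refine le_csInf hS1 ?_
        intro m hm
        have := csInf_le hb2 (hdbl m hm)
        linarith
      linarith
    · have hS1 : ¬ S1.Nonempty := fun ⟨m, hm⟩ => hS2 ⟨2 * m, hdbl m hm⟩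
      rw [Set.not_nonempty_iff_eq_empty] at hS1 hS2
      rw [hS1, hS2, Real.sInf_empty]
      norm_num

end
end

section
/- Let N ≥ 2. Every cellular mod-2 (N−1)-cycle A in the unit grid τ of ℝ^N is orientable: there exists a cellular integral (N−1)-cycle R all of whose coefficients lie in {−1, 0, 1}, whose mod-2 reduction equals A, and whose support equals supp A. -/
open MeasureTheory Metric Set
open scoped ENNReal NNReal

noncomputable section

namespace SixAux

variable {N : ℕ}

def decr (y : Fin N → ℤ) (j : Fin N) : Fin N → ℤ := fun i => y i - if i = j then 1 else 0

lemma decr_ne (y : Fin N → ℤ) (j : Fin N) : y ≠ decr y j := by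
  intro h
  have := congrFun h j
  simp only [decr, if_pos rfl] at this
  have h2 : y j = y j - 1 := this
  omega

lemma decr_comm (y : Fin N → ℤ) (j k : Fin N) : decr (decr y j) k = decr (decr y k) j := by
  funext i; simp [decr]; ring

lemma mem_gridCell_iff {x : Fin N → ℤ} {S : Finset (Fin N)} {y : Euc N} :
    y ∈ gridCell N x S ↔
      ∀ i, if i ∈ S then (x i : ℝ) ≤ y i ∧ y i ≤ (x i : ℝ) + 1 else y i = (x i : ℝ) :=
  Iff.rfl

lemma gridCell_subset_iff {v x : Fin N → ℤ} {T S : Finset (Fin N)} :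
    gridCell N v T ⊆ gridCell N x S ↔
      T ⊆ S ∧ (∀ i ∈ T, x i = v i) ∧ (∀ i, i ∉ S → x i = v i) ∧
        (∀ i ∈ S, i ∉ T → x i = v i ∨ x i = v i - 1) := by
  constructor
  · intro h
    have h0mem : (WithLp.toLp 2 (fun i => (v i : ℝ)) : Euc N) ∈ gridCell N v T := by
      intro i; simp only [PiLp.toLp_apply]
      split
      · exact ⟨le_rfl, by linarith⟩
      · trivial
    have h1mem : (WithLp.toLp 2 (fun i => (v i : ℝ) + if i ∈ T then 1 else 0) : Euc N) ∈ gridCell N v T := by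
      intro i; simp only [PiLp.toLp_apply]
      by_cases hi : i ∈ T
      · rw [if_pos hi]
        simp only [hi, if_pos]
        constructor <;> linarith
      · rw [if_neg hi]
        simp only [hi, if_neg, if_false]
        ring
    have h0 := h h0mem
    have h1 := h h1mem
    have hTS : T ⊆ S := by
      intro i hiT
      by_contra hiS
      have e0 := h0 i
      have e1 := h1 i
      simp only [PiLp.toLp_apply] at e0 e1
      rw [if_neg hiS] at e0 e1
      simp only [hiT, if_true] at e1
      rw [e0] at e1
      linarith
    refine ⟨hTS, ?_, ?_, ?_⟩
    · intro i hiT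
      have e0 := h0 i
      have e1 := h1 i
      simp only [PiLp.toLp_apply] at e0 e1
      rw [if_pos (hTS hiT)] at e0 e1
      simp only [hiT, if_true] at e1
      have hx1 : (x i : ℝ) ≤ v i := e0.1
      have hx2 : (v i : ℝ) + 1 ≤ x i + 1 := e1.2
      have : (x i : ℝ) = v i := le_antisymm hx1 (by linarith)
      exact_mod_cast this
    · intro i hiS
      have e0 := h0 i
      simp only [PiLp.toLp_apply] at e0
      rw [if_neg hiS] at e0
      exact_mod_cast e0.symm
    · intro i hiS hiT
      have e0 := h0 i
      simp only [PiLp.toLp_apply] at e0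
      rw [if_pos hiS] at e0
      have hx1 : x i ≤ v i := by exact_mod_cast e0.1
      have hx2 : (v i : ℝ) ≤ x i + 1 := e0.2
      have hx2' : v i ≤ x i + 1 := by exact_mod_cast hx2
      omega
  · rintro ⟨hTS, hT, hNS, hS⟩ y hy
    intro i
    have hyi := hy i
    by_cases hiS : i ∈ S
    · rw [if_pos hiS]
      by_cases hiT : i ∈ T
      · rw [if_pos hiT] at hyi
        rw [hT i hiT]
        exact hyi
      · rw [if_neg hiT] at hyi
        rcases hS i hiS hiT with h | h <;> rw [h] <;> rw [hyi] <;> push_cast <;>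
          constructor <;> linarith
    · rw [if_neg hiS]
      have hiT : i ∉ T := fun hh => hiS (hTS hh)
      rw [if_neg hiT] at hyi
      rw [hyi, hNS i hiS]


lemma cbdCell_apply (c F : CellIdx N) :
    cbdCell N c F = ∑ s ∈ c.2, (-1:ℤ)^((c.2.filter (· < s)).card) *
      ((if (((fun i => c.1 i + if i = s then 1 else 0), c.2.erase s) : CellIdx N) = F then 1 else 0)
        - (if ((c.1, c.2.erase s) : CellIdx N) = F then 1 else 0)) := by
  unfold cbdCell
  rw [Finsupp.finset_sum_apply]
  refine Finset.sum_congr rfl fun s hs => ?_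
  rw [Finsupp.smul_apply, Finsupp.sub_apply, Finsupp.single_apply, Finsupp.single_apply]
  simp [smul_eq_mul]

lemma cbdCell_eq_zero (c F : CellIdx N)
    (h : ∀ s ∈ c.2, ¬(F.2 = c.2.erase s ∧ (F.1 = c.1 ∨ c.1 = decr F.1 s))) :
    cbdCell N c F = 0 := by
  rw [cbdCell_apply]
  apply Finset.sum_eq_zero
  intro s hs
  have hns := h s hs
  rw [if_neg, if_neg]
  · ring
  · intro he
    apply hns
    refine ⟨(congrArg Prod.snd he).symm, Or.inl (congrArg Prod.fst he).symm⟩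
  · intro he
    apply hns
    refine ⟨(congrArg Prod.snd he).symm, Or.inr ?_⟩
    have hf := congrArg Prod.fst he
    funext i
    have := congrFun hf i
    simp only [decr] at *
    omega

lemma cbdCell_apply_bot (x : Fin N → ℤ) (T : Finset (Fin N)) (j : Fin N) (hj : j ∉ T) :
    cbdCell N (x, insert j T) (x, T) = -(-1:ℤ)^((T.filter (· < j)).card) := by
  rw [cbdCell_apply]
  rw [Finset.sum_eq_single_of_mem j (Finset.mem_insert_self j T)]
  · rw [Finset.erase_insert hj]
    rw [if_neg, if_pos rfl]
    · have : (insert j T).filter (· < j) = T.filter (· < j) := by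
        rw [Finset.filter_insert, if_neg (lt_irrefl j)]
      rw [this]; ring
    · intro he
      have := congrFun (congrArg Prod.fst he) j
      have h2 : x j + 1 = x j := by simpa using this
      omega
  · intro s hs hsj
    have hjs : j ∈ (insert j T).erase s :=
      Finset.mem_erase.mpr ⟨Ne.symm hsj, Finset.mem_insert_self j T⟩
    rw [if_neg, if_neg]
    · ring
    · intro he
      have := congrArg Prod.snd he
      simp only at this
      rw [this] at hjs; exact hj hjs
    · intro he
      have := congrArg Prod.snd he
      simp only at this
      rw [this] at hjs; exact hj hjs

lemma cbdCell_apply_top (x : Fin N → ℤ) (T : Finset (Fin N)) (j : Fin N) (hj : j ∉ T) :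
    cbdCell N (decr x j, insert j T) (x, T) = (-1:ℤ)^((T.filter (· < j)).card) := by
  rw [cbdCell_apply]
  rw [Finset.sum_eq_single_of_mem j (Finset.mem_insert_self j T)]
  · rw [Finset.erase_insert hj]
    rw [if_pos, if_neg]
    · have : (insert j T).filter (· < j) = T.filter (· < j) := by
        rw [Finset.filter_insert, if_neg (lt_irrefl j)]
      rw [this]; ring
    · intro he
      have := congrFun (congrArg Prod.fst he) j
      have h2 : x j - 1 = x j := by simpa [decr] using this
      omega
    · have : (fun i => decr x j i + if i = j then 1 else 0) = x := by
        funext i; simp only [decr]; split <;> ring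
      rw [this]
  · intro s hs hsj
    have hjs : j ∈ (insert j T).erase s :=
      Finset.mem_erase.mpr ⟨Ne.symm hsj, Finset.mem_insert_self j T⟩
    rw [if_neg, if_neg]
    · ring
    · intro he
      have := congrArg Prod.snd he
      simp only at this
      rw [this] at hjs; exact hj hjs
    · intro he
      have := congrArg Prod.snd he
      simp only at this
      rw [this] at hjs; exact hj hjs


lemma cycle_rel (hN : 2 ≤ N) (A : Finset (CellIdx N)) (hA : IsCellCycle₂ N (N - 1) A)
    (j z : Fin N) (hjz : j ≠ z) (v : Fin N → ℤ) :
    ((if (v, ({z}ᶜ : Finset (Fin N))) ∈ A then 1 else 0)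
      + (if (decr v j, ({z}ᶜ : Finset (Fin N))) ∈ A then 1 else 0)
      + (if (v, ({j}ᶜ : Finset (Fin N))) ∈ A then 1 else 0)
      + (if (decr v z, ({j}ᶜ : Finset (Fin N))) ∈ A then 1 else 0) : ZMod 2) = 0 := by
  classical
  set T : Finset (Fin N) := ({j, z} : Finset (Fin N))ᶜ with hT
  have hjT : j ∉ T := by simp [hT]
  have hzT : z ∉ T := by simp [hT]
  have hcompl : Tᶜ = {j, z} := by simp [hT]
  have hpaircard : ({j, z} : Finset (Fin N)).card = 2 := by
    rw [Finset.card_insert_of_notMem (by simp [hjz]), Finset.card_singleton]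
  have hTcard : T.card = N - 1 - 1 := by
    rw [hT, Finset.card_compl, hpaircard, Fintype.card_fin]
    omega
  have hins_j : insert j T = ({z}ᶜ : Finset (Fin N)) := by
    ext i
    simp only [Finset.mem_insert, hT, Finset.mem_compl, Finset.mem_insert,
      Finset.mem_singleton]
    constructor
    · rintro (rfl | h)
      · exact hjz
      · tauto
    · intro hiz
      by_cases hij : i = j
      · exact Or.inl hij
      · exact Or.inr (by tauto)
  have hins_z : insert z T = ({j}ᶜ : Finset (Fin N)) := by
    ext i
    simp only [Finset.mem_insert, hT, Finset.mem_compl, Finset.mem_insert,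
      Finset.mem_singleton]
    constructor
    · rintro (rfl | h)
      · exact (Ne.symm hjz)
      · tauto
    · intro hij
      by_cases hiz : i = z
      · exact Or.inl hiz
      · exact Or.inr (by tauto)
  have hmain := hA.2 v T hTcard
  set Q4 : Finset (CellIdx N) :=
    {(v, insert j T), (decr v j, insert j T), (v, insert z T), (decr v z, insert z T)} with hQ4
  have hset : {c ∈ (A : Set (CellIdx N)) | gridCell N v T ⊆ gridCell N c.1 c.2}
      = ↑(A.filter fun c => c ∈ Q4) := by
    ext c
    simp only [Set.mem_setOf_eq, Finset.coe_filter, Finset.mem_coe]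
    constructor
    · rintro ⟨hcA, hsub⟩
      refine ⟨hcA, ?_⟩
      obtain ⟨hTS, hTv, hNSv, hSv⟩ := gridCell_subset_iff.mp hsub
      have hcard : c.2.card = N - 1 := hA.1 c hcA
      have hss : T ⊂ c.2 := by
        refine ⟨hTS, fun hcT => ?_⟩
        have := Finset.card_le_card hcT
        omega
      obtain ⟨s, hsc2, hsT⟩ := Finset.exists_of_ssubset hss
      have hs2 : c.2 = insert s T := by
        refine (Finset.eq_of_subset_of_card_le (Finset.insert_subset hsc2 hTS) ?_).symm
        rw [Finset.card_insert_of_notMem hsT]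
        omega
      have hsjz : s = j ∨ s = z := by
        have : s ∈ Tᶜ := Finset.mem_compl.mpr hsT
        rw [hcompl] at this
        simpa using this
      have hoff : ∀ i, i ≠ s → c.1 i = v i := by
        intro i his
        by_cases hiT : i ∈ T
        · exact hTv i hiT
        · have : i ∉ c.2 := by
            rw [hs2]
            simp [his, hiT]
          exact hNSv i this
      have hc1 : c.1 = v ∨ c.1 = decr v s := by
        rcases hSv s (by rw [hs2]; exact Finset.mem_insert_self s T) hsT with h | h
        · left; funext i
          by_cases his : i = s
          · subst his; exact h
          · exact hoff i his
        · right; funext i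
          simp only [decr]
          by_cases his : i = s
          · subst his; rw [if_pos rfl]; omega
          · rw [if_neg his]; have := hoff i his; omega
      have hc : c = (c.1, c.2) := rfl
      rw [hQ4]
      simp only [Finset.mem_insert, Finset.mem_singleton]
      rcases hsjz with rfl | rfl
      · rcases hc1 with h1 | h1
        · left; rw [hc, hs2, h1]
        · right; left; rw [hc, hs2, h1]
      · rcases hc1 with h1 | h1
        · right; right; left; rw [hc, hs2, h1]
        · right; right; right; rw [hc, hs2, h1]
    · rintro ⟨hcA, hcQ⟩
      refine ⟨hcA, ?_⟩
      apply gridCell_subset_iff.mpr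
      rw [hQ4] at hcQ
      simp only [Finset.mem_insert, Finset.mem_singleton] at hcQ
      have hgen : ∀ s : Fin N, s ∉ T →
          (T ⊆ insert s T ∧ (∀ i ∈ T, v i = v i) ∧ (∀ i, i ∉ insert s T → v i = v i) ∧
           (∀ i ∈ insert s T, i ∉ T → v i = v i ∨ v i = v i - 1)) ∧
          (T ⊆ insert s T ∧ (∀ i ∈ T, decr v s i = v i) ∧
           (∀ i, i ∉ insert s T → decr v s i = v i) ∧
           (∀ i ∈ insert s T, i ∉ T → decr v s i = v i ∨ decr v s i = v i - 1)) := by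
        intro s hsT
        refine ⟨⟨Finset.subset_insert s T, fun i _ => rfl, fun i _ => rfl,
          fun i _ _ => Or.inl rfl⟩, Finset.subset_insert s T, ?_, ?_, ?_⟩
        · intro i hiT
          have his : i ≠ s := fun h => hsT (h ▸ hiT)
          simp [decr, his]
        · intro i hins
          have his : i ≠ s := fun h => hins (h ▸ Finset.mem_insert_self s T)
          simp [decr, his]
        · intro i hins hiT
          have his : i = s := by
            rcases Finset.mem_insert.mp hins with h | h
            · exact h
            · exact absurd h hiT
          subst his
          right; simp [decr]
      rcases hcQ with rfl | rfl | rfl | rfl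
      · exact (hgen j hjT).1
      · exact (hgen j hjT).2
      · exact (hgen z hzT).1
      · exact (hgen z hzT).2
  rw [hset, Set.ncard_coe_finset] at hmain
  have hfilter : A.filter (fun c => c ∈ Q4) = Q4.filter (fun c => c ∈ A) := by
    rw [Finset.filter_mem_eq_inter, Finset.filter_mem_eq_inter, Finset.inter_comm]
  rw [hfilter] at hmain
  have hvj : v ≠ decr v j := decr_ne v j
  have hvz : v ≠ decr v z := decr_ne v z
  have hjzT : insert j T ≠ insert z T := by
    intro h
    have : j ∈ insert z T := h ▸ Finset.mem_insert_self j T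
    rcases Finset.mem_insert.mp this with h' | h'
    · exact hjz h'
    · exact hjT h'
  have hne1 : ((v, insert j T) : CellIdx N) ∉
      ({(decr v j, insert j T), (v, insert z T), (decr v z, insert z T)} : Finset (CellIdx N)) := by
    simp only [Finset.mem_insert, Finset.mem_singleton, Prod.mk.injEq, not_or]
    exact ⟨fun h => hvj h.1, fun h => hjzT h.2, fun h => hjzT h.2⟩
  have hne2 : ((decr v j, insert j T) : CellIdx N) ∉
      ({(v, insert z T), (decr v z, insert z T)} : Finset (CellIdx N)) := by
    simp only [Finset.mem_insert, Finset.mem_singleton, Prod.mk.injEq, not_or]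
    exact ⟨fun h => hjzT h.2, fun h => hjzT h.2⟩
  have hne3 : ((v, insert z T) : CellIdx N) ∉
      ({(decr v z, insert z T)} : Finset (CellIdx N)) := by
    simp only [Finset.mem_singleton, Prod.mk.injEq, not_and]
    intro h; exact absurd h (hvz)
  have hcards : (Q4.filter (fun c => c ∈ A)).card
      = (if ((v, insert j T) : CellIdx N) ∈ A then 1 else 0)
        + ((if ((decr v j, insert j T) : CellIdx N) ∈ A then 1 else 0)
        + ((if ((v, insert z T) : CellIdx N) ∈ A then 1 else 0)
        + (if ((decr v z, insert z T) : CellIdx N) ∈ A then 1 else 0))) := by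
    rw [hQ4, Finset.card_filter]
    rw [Finset.sum_insert hne1, Finset.sum_insert hne2, Finset.sum_insert hne3,
      Finset.sum_singleton]
  rw [hcards] at hmain
  have hcast : ((((if ((v, insert j T) : CellIdx N) ∈ A then 1 else 0)
        + ((if ((decr v j, insert j T) : CellIdx N) ∈ A then 1 else 0)
        + ((if ((v, insert z T) : CellIdx N) ∈ A then 1 else 0)
        + (if ((decr v z, insert z T) : CellIdx N) ∈ A then 1 else 0)))) : ℕ) : ZMod 2) = 0 := by
    rw [ZMod.natCast_eq_zero_iff]
    exact hmain.two_dvd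
  push_cast at hcast
  rw [hins_j, hins_z] at hcast
  calc ((if (v, ({z}ᶜ : Finset (Fin N))) ∈ A then 1 else 0)
      + (if (decr v j, ({z}ᶜ : Finset (Fin N))) ∈ A then 1 else 0)
      + (if (v, ({j}ᶜ : Finset (Fin N))) ∈ A then 1 else 0)
      + (if (decr v z, ({j}ᶜ : Finset (Fin N))) ∈ A then 1 else 0) : ZMod 2)
      = (if (v, ({z}ᶜ : Finset (Fin N))) ∈ A then 1 else 0)
        + ((if (decr v j, ({z}ᶜ : Finset (Fin N))) ∈ A then 1 else 0)
        + ((if (v, ({j}ᶜ : Finset (Fin N))) ∈ A then 1 else 0)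
        + (if (decr v z, ({j}ᶜ : Finset (Fin N))) ∈ A then 1 else 0))) := by ring
    _ = 0 := hcast


def cnt (A : Finset (CellIdx N)) (z : Fin N) (y : Fin N → ℤ) : ℕ :=
  (A.filter fun c => c.2 = ({z}ᶜ : Finset (Fin N)) ∧ (∀ i, i ≠ z → c.1 i = y i)
    ∧ y z < c.1 z).card

lemma cnt_eq_sum (A : Finset (CellIdx N)) (z : Fin N) (y : Fin N → ℤ) (B : ℤ)
    (hB : ∀ c ∈ A, c.1 z < B) :
    cnt A z y = ∑ k ∈ Finset.range (B - (y z + 1)).toNat,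
      (if ((fun i => if i = z then y z + 1 + (k : ℤ) else y i, ({z}ᶜ : Finset (Fin N)))
          : CellIdx N) ∈ A then 1 else 0) := by
  classical
  have hrhs : (∑ k ∈ Finset.range (B - (y z + 1)).toNat,
      (if ((fun i => if i = z then y z + 1 + (k : ℤ) else y i, ({z}ᶜ : Finset (Fin N)))
          : CellIdx N) ∈ A then 1 else 0))
      = ((Finset.range (B - (y z + 1)).toNat).filter
          (fun k : ℕ => ((fun i => if i = z then y z + 1 + (k : ℤ) else y i,
            ({z}ᶜ : Finset (Fin N))) : CellIdx N) ∈ A)).card :=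
    (Finset.card_filter _ _).symm
  rw [hrhs]
  unfold cnt
  refine Finset.card_bij' (fun c _ => (c.1 z - (y z + 1)).toNat)
    (fun k _ => ((fun i => if i = z then y z + 1 + (k : ℤ) else y i,
      ({z}ᶜ : Finset (Fin N))) : CellIdx N)) ?_ ?_ ?_ ?_
  · intro c hc
    rw [Finset.mem_filter] at hc
    obtain ⟨hcA, hc2, hoff, hlt⟩ := hc
    have hcB := hB c hcA
    rw [Finset.mem_filter, Finset.mem_range]
    constructor
    · beta_reduce
      omega
    · have hcell : ((fun i => if i = z then y z + 1 + ((c.1 z - (y z + 1)).toNat : ℤ) else y i,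
          ({z}ᶜ : Finset (Fin N))) : CellIdx N) = c := by
        have hfst : (fun i => if i = z then y z + 1 + ((c.1 z - (y z + 1)).toNat : ℤ) else y i)
            = c.1 := by
          funext i
          by_cases hiz : i = z
          · subst hiz; rw [if_pos rfl]; omega
          · rw [if_neg hiz]; exact (hoff i hiz).symm
        rw [hfst, ← hc2]
      rw [hcell]
      exact hcA
  · intro k hk
    rw [Finset.mem_filter, Finset.mem_range] at hk
    rw [Finset.mem_filter]
    refine ⟨hk.2, rfl, ?_, ?_⟩
    · intro i hiz
      show (if i = z then y z + 1 + (k : ℤ) else y i) = y i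
      rw [if_neg hiz]
    · show y z < (if z = z then y z + 1 + (k : ℤ) else y z)
      rw [if_pos rfl]
      omega
  · intro c hc
    rw [Finset.mem_filter] at hc
    obtain ⟨hcA, hc2, hoff, hlt⟩ := hc
    have hfst : (fun i => if i = z then y z + 1 + ((c.1 z - (y z + 1)).toNat : ℤ) else y i)
        = c.1 := by
      funext i
      by_cases hiz : i = z
      · subst hiz; rw [if_pos rfl]; omega
      · rw [if_neg hiz]; exact (hoff i hiz).symm
    rw [Prod.ext_iff]
    exact ⟨hfst, hc2.symm⟩
  · intro k hk
    show (((if z = z then y z + 1 + (k : ℤ) else y z)) - (y z + 1)).toNat = k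
    rw [if_pos rfl]
    omega


lemma zmod_two_add_self (x : ZMod 2) : x + x = 0 := CharTwo.add_self_eq_zero x

lemma key (hN : 2 ≤ N) (A : Finset (CellIdx N)) (hA : IsCellCycle₂ N (N - 1) A)
    (z j : Fin N) (y : Fin N → ℤ) :
    ((cnt A z (decr y j) : ZMod 2))
      = (cnt A z y : ZMod 2) + (if (y, ({j}ᶜ : Finset (Fin N))) ∈ A then 1 else 0) := by
  classical
  by_cases hjz : j = z
  · subst hjz
    -- direct filter comparison
    have hfe : (A.filter fun c => c.2 = ({j}ᶜ : Finset (Fin N))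
          ∧ (∀ i, i ≠ j → c.1 i = decr y j i) ∧ decr y j j < c.1 j)
        = (A.filter fun c => (c.2 = ({j}ᶜ : Finset (Fin N))
          ∧ (∀ i, i ≠ j → c.1 i = y i) ∧ y j < c.1 j) ∨ c = (y, ({j}ᶜ : Finset (Fin N)))) := by
      apply Finset.filter_congr
      intro c hc
      constructor
      · rintro ⟨h2, hoff, hlt⟩
        have hoff' : ∀ i, i ≠ j → c.1 i = y i := by
          intro i hij
          have := hoff i hij
          simpa [decr, hij] using this
        have hlt' : y j - 1 < c.1 j := by simpa [decr] using hlt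
        by_cases hyc : y j < c.1 j
        · exact Or.inl ⟨h2, hoff', hyc⟩
        · right
          have hcj : c.1 j = y j := by omega
          have hfst : c.1 = y := by
            funext i
            by_cases hij : i = j
            · subst hij; exact hcj
            · exact hoff' i hij
          rw [Prod.ext_iff]
          exact ⟨hfst, h2⟩
      · rintro (⟨h2, hoff, hlt⟩ | hc')
        · refine ⟨h2, ?_, ?_⟩
          · intro i hij
            simp [decr, hij, hoff i hij]
          · show y j - (if j = j then 1 else 0) < c.1 j
            rw [if_pos rfl]
            omega
        · subst hc'
          refine ⟨rfl, fun i hij => by simp [decr, hij], ?_⟩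
          show y j - (if j = j then 1 else 0) < y j
          rw [if_pos rfl]
          omega
    have hdisj : Disjoint
        (A.filter fun c => c.2 = ({j}ᶜ : Finset (Fin N))
          ∧ (∀ i, i ≠ j → c.1 i = y i) ∧ y j < c.1 j)
        (A.filter fun c => c = (y, ({j}ᶜ : Finset (Fin N)))) := by
      rw [Finset.disjoint_left]
      intro c hc1 hc2
      rw [Finset.mem_filter] at hc1 hc2
      obtain ⟨-, h2, hoff, hlt⟩ := hc1
      obtain ⟨-, hc'⟩ := hc2
      rw [hc'] at hlt
      exact absurd hlt (lt_irrefl _)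
    have hcard2 : (A.filter fun c => c = ((y, ({j}ᶜ : Finset (Fin N))) : CellIdx N)).card
        = if ((y, ({j}ᶜ : Finset (Fin N))) : CellIdx N) ∈ A then 1 else 0 := by
      rw [Finset.filter_eq']
      split <;> simp
    unfold cnt
    rw [hfe, Finset.filter_or, Finset.card_union_of_disjoint hdisj, hcard2, Nat.cast_add]
    congr 1
    split <;> simp
  · -- j ≠ z
    obtain ⟨B, hB1, hB2⟩ : ∃ B : ℤ, (∀ c ∈ A, c.1 z + 1 < B) ∧ y z + 1 ≤ B := by
      refine ⟨(insert (y z) (A.image fun c => c.1 z)).max' ⟨y z, Finset.mem_insert_self _ _⟩ + 2,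
        ?_, ?_⟩
      · intro c hc
        have hmem : c.1 z ∈ insert (y z) (A.image fun c => c.1 z) :=
          Finset.mem_insert_of_mem (Finset.mem_image_of_mem _ hc)
        have := Finset.le_max' _ _ hmem
        omega
      · have := Finset.le_max' _ _ (Finset.mem_insert_self (y z) (A.image fun c => c.1 z))
        omega
    have hBa : ∀ c ∈ A, c.1 z < B := fun c hc => by have := hB1 c hc; omega
    have hzj : ¬ z = j := fun h => hjz h.symm
    have hdz : decr y j z = y z := by
      show y z - (if z = j then 1 else 0) = y z
      rw [if_neg hzj]
      ring
    have e1 := cnt_eq_sum A z y B hBa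
    have e2 := cnt_eq_sum A z (decr y j) B hBa
    rw [hdz] at e2
    set n : ℕ := (B - (y z + 1)).toNat with hn
    have hn' : (n : ℤ) = B - (y z + 1) := by rw [hn]; omega
    have hfun : ∀ k : ℕ, (fun i => if i = z then y z + 1 + (k : ℤ) else decr y j i)
        = decr (fun i => if i = z then y z + 1 + (k : ℤ) else y i) j := by
      intro k
      funext i
      show (if i = z then y z + 1 + (k : ℤ) else decr y j i)
        = (if i = z then y z + 1 + (k : ℤ) else y i) - (if i = j then 1 else 0)
      by_cases hiz : i = z
      · rw [if_pos hiz, if_pos hiz, if_neg (fun hij : i = j => hzj (hiz.symm.trans hij))]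
        ring
      · rw [if_neg hiz, if_neg hiz]
        rfl
    rw [show (fun k : ℕ => (if ((fun i => if i = z then y z + 1 + (k : ℤ) else decr y j i,
        ({z}ᶜ : Finset (Fin N))) : CellIdx N) ∈ A then (1:ℕ) else 0))
      = (fun k : ℕ => (if ((decr (fun i => if i = z then y z + 1 + (k : ℤ) else y i) j,
        ({z}ᶜ : Finset (Fin N))) : CellIdx N) ∈ A then (1:ℕ) else 0)) from
        funext fun k => by rw [hfun k]] at e2
    set g : ℕ → ZMod 2 := fun k =>
      (if (((fun i => if i = z then y z + (k : ℤ) else y i) : Fin N → ℤ),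
        ({j}ᶜ : Finset (Fin N))) ∈ A then 1 else 0) with hg
    have hterm : ∀ k ∈ Finset.range n,
        ((if ((decr (fun i => if i = z then y z + 1 + (k : ℤ) else y i) j,
            ({z}ᶜ : Finset (Fin N))) : CellIdx N) ∈ A then (1 : ZMod 2) else 0)
          + (if (((fun i => if i = z then y z + 1 + (k : ℤ) else y i : Fin N → ℤ),
            ({z}ᶜ : Finset (Fin N))) : CellIdx N) ∈ A then (1 : ZMod 2) else 0))
        = g (k + 1) - g k := by
      intro k _
      have hcyc := cycle_rel hN A hA j z hjz (fun i => if i = z then y z + 1 + (k : ℤ) else y i)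
      have hukz : decr (fun i => if i = z then y z + 1 + (k : ℤ) else y i) z
          = (fun i => if i = z then y z + (k : ℤ) else y i) := by
        funext i
        show (if i = z then y z + 1 + (k : ℤ) else y i) - (if i = z then 1 else 0)
          = (if i = z then y z + (k : ℤ) else y i)
        by_cases hiz : i = z
        · rw [if_pos hiz, if_pos hiz, if_pos hiz]; ring
        · rw [if_neg hiz, if_neg hiz, if_neg hiz]; ring
      have huk1 : (fun i => if i = z then y z + 1 + (k : ℤ) else y i)
          = (fun i => if i = z then y z + ((k + 1 : ℕ) : ℤ) else y i) := by
        funext i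
        show (if i = z then y z + 1 + (k : ℤ) else y i)
          = (if i = z then y z + ((k + 1 : ℕ) : ℤ) else y i)
        by_cases hiz : i = z
        · rw [if_pos hiz, if_pos hiz]; push_cast; ring
        · rw [if_neg hiz, if_neg hiz]
      rw [hukz] at hcyc
      rw [CharTwo.sub_eq_add, hg]
      beta_reduce
      rw [← huk1]
      linear_combination hcyc - zmod_two_add_self
        ((if (((fun i => if i = z then y z + 1 + (k : ℤ) else y i : Fin N → ℤ),
            ({j}ᶜ : Finset (Fin N))) : CellIdx N) ∈ A then (1 : ZMod 2) else 0)
          + (if (((fun i => if i = z then y z + (k : ℤ) else y i : Fin N → ℤ),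
            ({j}ᶜ : Finset (Fin N))) : CellIdx N) ∈ A then (1 : ZMod 2) else 0))
    have htel : (∑ k ∈ Finset.range n, (g (k + 1) - g k)) = g n - g 0 :=
      Finset.sum_range_sub g n
    have hnotA : (((fun i => if i = z then y z + (n : ℤ) else y i : Fin N → ℤ),
        ({j}ᶜ : Finset (Fin N))) : CellIdx N) ∉ A := by
      intro hmem
      have hlt := hB1 _ hmem
      have hcz : (((fun i => if i = z then y z + (n : ℤ) else y i : Fin N → ℤ),
          ({j}ᶜ : Finset (Fin N))) : CellIdx N).1 z = y z + (n : ℤ) := by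
        show (if z = z then y z + (n : ℤ) else y z) = _
        rw [if_pos rfl]
      rw [hcz] at hlt
      omega
    have hg_n : g n = 0 := by
      rw [hg]
      beta_reduce
      rw [if_neg hnotA]
    have hy0 : (fun i => if i = z then y z + ((0 : ℕ) : ℤ) else y i) = y := by
      funext i
      by_cases hiz : i = z
      · rw [if_pos hiz, hiz]; push_cast; ring
      · rw [if_neg hiz]
    have hg0 : g 0 = (if ((y, ({j}ᶜ : Finset (Fin N))) : CellIdx N) ∈ A
        then (1 : ZMod 2) else 0) := by
      rw [hg]
      beta_reduce
      rw [show ((0 : ℕ) : ℤ) = ((0 : ℕ) : ℤ) from rfl]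
      rw [show (fun i => if i = z then y z + ((0 : ℕ) : ℤ) else y i) = y from hy0]
    have E : (cnt A z (decr y j) : ZMod 2) + (cnt A z y : ZMod 2) = g n - g 0 := by
      rw [e1, e2]
      push_cast [apply_ite (Nat.cast : ℕ → ZMod 2)]
      rw [← Finset.sum_add_distrib, ← htel]
      exact Finset.sum_congr rfl hterm
    rw [hg_n, hg0] at E
    linear_combination E - zmod_two_add_self ((cnt A z y : ZMod 2))
      - zmod_two_add_self (if ((y, ({j}ᶜ : Finset (Fin N))) : CellIdx N) ∈ A
        then (1 : ZMod 2) else 0)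


def W (A : Finset (CellIdx N)) (z : Fin N) (y : Fin N → ℤ) : ℤ := ((cnt A z y : ℤ)) % 2

lemma W01 (A : Finset (CellIdx N)) (z : Fin N) (y : Fin N → ℤ) :
    W A z y = 0 ∨ W A z y = 1 := Int.emod_two_eq_zero_or_one _

lemma W_cast (A : Finset (CellIdx N)) (z : Fin N) (y : Fin N → ℤ) :
    ((W A z y : ℤ) : ZMod 2) = ((cnt A z y : ℕ) : ZMod 2) := by
  have h := Int.emod_add_mul_ediv (cnt A z y : ℤ) 2
  have h2 : ((( (cnt A z y : ℤ) % 2 + 2 * ((cnt A z y : ℤ) / 2)) : ℤ) : ZMod 2)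
      = (((cnt A z y : ℤ)) : ZMod 2) := by rw [h]
  push_cast at h2
  unfold W
  push_cast
  have htwo : ((2 : ℤ) : ZMod 2) = 0 := by decide
  linear_combination h2 - ((((cnt A z y : ℤ) / 2 : ℤ) : ZMod 2)) * htwo

lemma W_decr_mem (hN : 2 ≤ N) (A : Finset (CellIdx N)) (hA : IsCellCycle₂ N (N - 1) A)
    (z j : Fin N) (y : Fin N → ℤ) (hc : ((y, ({j}ᶜ : Finset (Fin N))) : CellIdx N) ∈ A) :
    W A z (decr y j) - W A z y = 1 ∨ W A z (decr y j) - W A z y = -1 := by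
  have hk := key hN A hA z j y
  rw [if_pos hc] at hk
  rw [← W_cast, ← W_cast] at hk
  rcases W01 A z (decr y j) with h1 | h1 <;> rcases W01 A z y with h2 | h2 <;>
      rw [h1, h2] at hk ⊢
  · exfalso
    have h3 : ((0:ℤ) : ZMod 2) = ((0:ℤ) : ZMod 2) + 1 := hk
    simp at h3
  · right; norm_num
  · left; norm_num
  · exfalso
    have h3 : ((1:ℤ) : ZMod 2) = ((1:ℤ) : ZMod 2) + 1 := hk
    simp at h3

lemma W_decr_not_mem (hN : 2 ≤ N) (A : Finset (CellIdx N)) (hA : IsCellCycle₂ N (N - 1) A)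
    (z j : Fin N) (y : Fin N → ℤ) (hc : ((y, ({j}ᶜ : Finset (Fin N))) : CellIdx N) ∉ A) :
    W A z (decr y j) = W A z y := by
  have hk := key hN A hA z j y
  rw [if_neg hc, add_zero] at hk
  rw [← W_cast, ← W_cast] at hk
  rcases W01 A z (decr y j) with h1 | h1 <;> rcases W01 A z y with h2 | h2 <;>
      rw [h1, h2] at hk ⊢
  · exfalso
    have h3 : ((0:ℤ) : ZMod 2) = ((1:ℤ) : ZMod 2) := hk
    simp at h3
  · exfalso
    have h3 : ((1:ℤ) : ZMod 2) = ((0:ℤ) : ZMod 2) := hk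
    simp at h3

def sig (A : Finset (CellIdx N)) (z : Fin N) (c : CellIdx N) : ℤ :=
  ∑ t ∈ c.2ᶜ, (-1 : ℤ)^(t : ℕ) * (W A z (decr c.1 t) - W A z c.1)

def R (A : Finset (CellIdx N)) (z : Fin N) : CChain N :=
  ∑ c ∈ A, Finsupp.single c (sig A z c)

lemma R_apply (A : Finset (CellIdx N)) (z : Fin N) (c : CellIdx N) :
    R A z c = if c ∈ A then sig A z c else 0 := by
  unfold R
  rw [Finsupp.finset_sum_apply]
  rw [Finset.sum_congr rfl (fun c' _ => Finsupp.single_apply)]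
  exact Finset.sum_ite_eq' A c (sig A z)

lemma R_val (hN : 2 ≤ N) (A : Finset (CellIdx N)) (hA : IsCellCycle₂ N (N - 1) A)
    (z : Fin N) (x : Fin N → ℤ) (S : Finset (Fin N)) (t : Fin N) (hS : Sᶜ = {t}) :
    R A z ((x, S) : CellIdx N) = (-1 : ℤ)^(t : ℕ) * (W A z (decr x t) - W A z x) := by
  have hSc : S = ({t}ᶜ : Finset (Fin N)) := by rw [← hS, compl_compl]
  rw [R_apply]
  by_cases hmem : ((x, S) : CellIdx N) ∈ A
  · rw [if_pos hmem]
    unfold sig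
    show ∑ t' ∈ Sᶜ, _ = _
    rw [hS, Finset.sum_singleton]
  · rw [if_neg hmem]
    rw [hSc] at hmem
    rw [W_decr_not_mem hN A hA z t x hmem]
    ring

lemma card_filter_lt_univ (j : Fin N) :
    ((Finset.univ : Finset (Fin N)).filter (· < j)).card = (j : ℕ) := by
  have : (Finset.univ : Finset (Fin N)).filter (· < j) = Finset.Iio j := by
    ext i
    simp [Finset.mem_Iio]
  rw [this, Fin.card_Iio]


lemma cbd_R (hN : 2 ≤ N) (A : Finset (CellIdx N)) (hA : IsCellCycle₂ N (N - 1) A) (z : Fin N) :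
    cbd N (R A z) = 0 := by
  classical
  apply Finsupp.ext
  intro F
  rw [Finsupp.coe_zero, Pi.zero_apply]
  unfold cbd
  rw [Finsupp.sum_apply, Finsupp.sum]
  have hsupp : (R A z).support ⊆ A := by
    intro c hc
    by_contra hcA
    have h0 := R_apply A z c
    rw [if_neg hcA] at h0
    exact (Finsupp.mem_support_iff.mp hc) h0
  rw [Finset.sum_subset hsupp (fun c _ hc => by
    rw [Finsupp.notMem_support_iff.mp hc, zero_smul, Finsupp.coe_zero, Pi.zero_apply])]
  obtain ⟨v, T⟩ := F
  by_cases hT : T.card = N - 2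
  · -- main case
    have hTc2 : Tᶜ.card = 2 := by
      rw [Finset.card_compl, Fintype.card_fin, hT]
      omega
    obtain ⟨j, k, hjk, hTc⟩ := Finset.card_eq_two.mp hTc2
    have hjT : j ∉ T := by
      have : j ∈ Tᶜ := by rw [hTc]; exact Finset.mem_insert_self j {k}
      exact Finset.mem_compl.mp this
    have hkT : k ∉ T := by
      have : k ∈ Tᶜ := by
        rw [hTc]; exact Finset.mem_insert_of_mem (Finset.mem_singleton_self k)
      exact Finset.mem_compl.mp this
    have hcomplj : (insert j T)ᶜ = ({k} : Finset (Fin N)) := by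
      rw [Finset.compl_insert, hTc, Finset.erase_insert (by simp [hjk])]
    have herase : ({j, k} : Finset (Fin N)).erase k = {j} := by
      ext i
      simp only [Finset.mem_erase, Finset.mem_insert, Finset.mem_singleton]
      constructor
      · rintro ⟨hik, rfl | rfl⟩
        · rfl
        · exact absurd rfl hik
      · rintro rfl
        exact ⟨hjk, Or.inl rfl⟩
    have hcomplk : (insert k T)ᶜ = ({j} : Finset (Fin N)) := by
      rw [Finset.compl_insert, hTc, herase]
    have hcardj : (insert j T).card = N - 1 := by
      rw [Finset.card_insert_of_notMem hjT, hT]; omega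
    have hcardk : (insert k T).card = N - 1 := by
      rw [Finset.card_insert_of_notMem hkT, hT]; omega
    set Q4 : Finset (CellIdx N) :=
      {((v, insert j T) : CellIdx N), (decr v j, insert j T), (v, insert k T),
        (decr v k, insert k T)} with hQ4
    have hzero2 : ∀ c ∈ A ∪ Q4, c ∉ Q4 → (R A z c • cbdCell N c) ((v, T) : CellIdx N) = 0 := by
      intro c hcu hcQ
      have hcA : c ∈ A := by
        rcases Finset.mem_union.mp hcu with h | h
        · exact h
        · exact absurd h hcQ
      have hcz : cbdCell N c ((v, T) : CellIdx N) = 0 := by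
        apply cbdCell_eq_zero
        rintro s hs ⟨h1, h2⟩
        apply hcQ
        have hsT : s ∉ T := by
          have : T = c.2.erase s := h1
          rw [this]
          exact Finset.notMem_erase s c.2
        have hc2 : c.2 = insert s T := by
          have : T = c.2.erase s := h1
          rw [this, Finset.insert_erase hs]
        have hsjk : s = j ∨ s = k := by
          have : s ∈ Tᶜ := Finset.mem_compl.mpr hsT
          rw [hTc] at this
          simpa using this
        have hceta : c = ((c.1, c.2) : CellIdx N) := rfl
        have hv : (((v, T) : CellIdx N)).1 = v := rfl
        rw [hQ4]
        simp only [Finset.mem_insert, Finset.mem_singleton]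
        rcases hsjk with rfl | rfl
        · rcases h2 with h | h
          · left; rw [hceta, hc2, ← h]
          · right; left; rw [hceta, hc2, h, hv]
        · rcases h2 with h | h
          · right; right; left; rw [hceta, hc2, ← h]
          · right; right; right; rw [hceta, hc2, h, hv]
      rw [Finsupp.smul_apply, hcz, smul_zero]
    rw [Finset.sum_subset Finset.subset_union_left (fun c hcu hc => by
      have h0 := R_apply A z c
      rw [if_neg hc] at h0
      rw [h0, zero_smul, Finsupp.coe_zero, Pi.zero_apply])]
    rw [← Finset.sum_subset Finset.subset_union_right hzero2]
    -- expand the four-term sum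
    have hvj : v ≠ decr v j := decr_ne v j
    have hvk : v ≠ decr v k := decr_ne v k
    have hjkT : insert j T ≠ insert k T := by
      intro h
      have : j ∈ insert k T := h ▸ Finset.mem_insert_self j T
      rcases Finset.mem_insert.mp this with h' | h'
      · exact hjk h'
      · exact hjT h'
    have hne1 : ((v, insert j T) : CellIdx N) ∉
        ({((decr v j, insert j T) : CellIdx N), (v, insert k T), (decr v k, insert k T)} :
          Finset (CellIdx N)) := by
      simp only [Finset.mem_insert, Finset.mem_singleton, Prod.mk.injEq, not_or]
      exact ⟨fun h => hvj h.1, fun h => hjkT h.2, fun h => hjkT h.2⟩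
    have hne2 : ((decr v j, insert j T) : CellIdx N) ∉
        ({((v, insert k T) : CellIdx N), (decr v k, insert k T)} : Finset (CellIdx N)) := by
      simp only [Finset.mem_insert, Finset.mem_singleton, Prod.mk.injEq, not_or]
      exact ⟨fun h => hjkT h.2, fun h => hjkT h.2⟩
    have hne3 : ((v, insert k T) : CellIdx N) ∉
        ({((decr v k, insert k T) : CellIdx N)} : Finset (CellIdx N)) := by
      simp only [Finset.mem_singleton, Prod.mk.injEq, not_and]
      intro h
      exact absurd h hvk
    rw [hQ4, Finset.sum_insert hne1, Finset.sum_insert hne2, Finset.sum_insert hne3,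
      Finset.sum_singleton]
    -- values
    have hR1 := R_val hN A hA z v (insert j T) k hcomplj
    have hR2 := R_val hN A hA z (decr v j) (insert j T) k hcomplj
    have hR3 := R_val hN A hA z v (insert k T) j hcomplk
    have hR4 := R_val hN A hA z (decr v k) (insert k T) j hcomplk
    have hX1 := cbdCell_apply_bot v T j hjT
    have hX2 := cbdCell_apply_top v T j hjT
    have hX3 := cbdCell_apply_bot v T k hkT
    have hX4 := cbdCell_apply_top v T k hkT
    rw [Finsupp.smul_apply, Finsupp.smul_apply, Finsupp.smul_apply, Finsupp.smul_apply,
      hR1, hR2, hR3, hR4, hX1, hX2, hX3, hX4]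
    rw [show decr (decr v k) j = decr (decr v j) k from decr_comm v k j]
    -- the sign computation
    set p : ℕ := (T.filter (· < j)).card with hp
    set q : ℕ := (T.filter (· < k)).card with hq
    have hsplit : ∀ m : Fin N, ((m : ℕ))
        = (T.filter (· < m)).card + ((Tᶜ).filter (· < m)).card := by
      intro m
      rw [← card_filter_lt_univ (N := N) m, ← Finset.union_compl T, Finset.filter_union,
        Finset.card_union_of_disjoint
          (Finset.disjoint_filter_filter disjoint_compl_right)]
    have hcj : ((Tᶜ).filter (· < j)).card = if k < j then 1 else 0 := by
      rw [hTc, Finset.filter_insert, if_neg (lt_irrefl j), Finset.filter_singleton]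
      split <;> simp
    have hck : ((Tᶜ).filter (· < k)).card = if j < k then 1 else 0 := by
      rw [hTc, Finset.filter_insert, Finset.filter_singleton, if_neg (lt_irrefl k)]
      split <;> simp
    have hpq : p + q + 1 = (j : ℕ) + (k : ℕ) := by
      have h1 := hsplit j
      have h2 := hsplit k
      rw [hcj, ← hp] at h1
      rw [hck, ← hq] at h2
      have hjkn : (j : ℕ) ≠ (k : ℕ) := fun h => hjk (Fin.ext h)
      rcases lt_or_gt_of_ne hjk with h | h
      · rw [if_neg (asymm h)] at h1
        rw [if_pos h] at h2
        omega
      · rw [if_pos h] at h1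
        rw [if_neg (asymm h)] at h2
        omega
    have hodd : Odd (p + (k : ℕ) + (q + (j : ℕ))) := by
      rw [Nat.odd_iff]
      omega
    have hmul : (-1 : ℤ)^(p + (k : ℕ)) * (-1 : ℤ)^(q + (j : ℕ)) = -1 := by
      rw [← pow_add]
      exact Odd.neg_one_pow hodd
    have hsq : (-1 : ℤ)^(p + (k : ℕ)) * (-1 : ℤ)^(p + (k : ℕ)) = 1 := by
      rw [← pow_add]
      exact Even.neg_one_pow ⟨p + (k : ℕ), by ring⟩
    have hsign : (-1 : ℤ)^p * (-1 : ℤ)^(k : ℕ) + (-1 : ℤ)^q * (-1 : ℤ)^(j : ℕ) = 0 := by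
      have h1 : (-1 : ℤ)^(q + (j : ℕ)) = -(-1 : ℤ)^(p + (k : ℕ)) := by
        linear_combination ((-1 : ℤ)^(p + (k : ℕ))) * hmul
          - ((-1 : ℤ)^(q + (j : ℕ))) * hsq
      rw [pow_add, pow_add] at h1
      linear_combination h1
    have E := W A z (decr (decr v j) k) - W A z (decr v j) - W A z (decr v k) + W A z v
    simp only [smul_eq_mul]
    linear_combination (W A z (decr (decr v j) k) - W A z (decr v j)
      - W A z (decr v k) + W A z v) * hsign
  · -- degenerate case: no cell of A has (v, T) as a face
    apply Finset.sum_eq_zero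
    intro c hc
    have hcz : cbdCell N c ((v, T) : CellIdx N) = 0 := by
      apply cbdCell_eq_zero
      rintro s hs ⟨h1, h2⟩
      apply hT
      have hcard := hA.1 c hc
      have h1' : T = c.2.erase s := h1
      rw [h1', Finset.card_erase_of_mem hs, hcard]
      omega
    rw [Finsupp.smul_apply, hcz, smul_zero]


lemma R_mem_val (hN : 2 ≤ N) (A : Finset (CellIdx N)) (hA : IsCellCycle₂ N (N - 1) A)
    (z : Fin N) (c : CellIdx N) (hc : c ∈ A) : R A z c = 1 ∨ R A z c = -1 := by
  have hcard : c.2.card = N - 1 := hA.1 c hc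
  have hcompl1 : c.2ᶜ.card = 1 := by
    rw [Finset.card_compl, Fintype.card_fin, hcard]
    omega
  obtain ⟨t, ht⟩ := Finset.card_eq_one.mp hcompl1
  have hc2 : c.2 = ({t}ᶜ : Finset (Fin N)) := by rw [← ht, compl_compl]
  have hceta : c = ((c.1, c.2) : CellIdx N) := rfl
  have hRv := R_val hN A hA z c.1 c.2 t ht
  rw [← hceta] at hRv
  have hmemA : ((c.1, ({t}ᶜ : Finset (Fin N))) : CellIdx N) ∈ A := by
    rw [← hc2, ← hceta]
    exact hc
  have hd := W_decr_mem hN A hA z t c.1 hmemA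
  rcases Nat.even_or_odd (t : ℕ) with he | he
  · rw [he.neg_one_pow] at hRv
    rcases hd with h | h <;> rw [h] at hRv
    · left; rw [hRv]; ring
    · right; rw [hRv]; ring
  · rw [he.neg_one_pow] at hRv
    rcases hd with h | h <;> rw [h] at hRv
    · right; rw [hRv]; ring
    · left; rw [hRv]; ring

lemma R_support (hN : 2 ≤ N) (A : Finset (CellIdx N)) (hA : IsCellCycle₂ N (N - 1) A)
    (z : Fin N) : (R A z).support = A := by
  ext c
  rw [Finsupp.mem_support_iff]
  constructor
  · intro h
    by_contra hcA
    have h0 := R_apply A z c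
    rw [if_neg hcA] at h0
    exact h h0
  · intro hc
    rcases R_mem_val hN A hA z c hc with h | h <;> rw [h] <;> norm_num

lemma R_vals (hN : 2 ≤ N) (A : Finset (CellIdx N)) (hA : IsCellCycle₂ N (N - 1) A)
    (z : Fin N) (c : CellIdx N) : R A z c = -1 ∨ R A z c = 0 ∨ R A z c = 1 := by
  by_cases hc : c ∈ A
  · rcases R_mem_val hN A hA z c hc with h | h
    · right; right; exact h
    · left; exact h
  · right; left
    rw [R_apply, if_neg hc]

lemma R_odd (hN : 2 ≤ N) (A : Finset (CellIdx N)) (hA : IsCellCycle₂ N (N - 1) A)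
    (z : Fin N) (c : CellIdx N) : Odd (R A z c) ↔ c ∈ A := by
  constructor
  · intro h
    by_contra hcA
    have h0 := R_apply A z c
    rw [if_neg hcA] at h0
    rw [h0] at h
    have := Int.odd_iff.mp h
    norm_num at this
  · intro hc
    rcases R_mem_val hN A hA z c hc with h | h <;> rw [h]
    · exact ⟨0, by ring⟩
    · exact ⟨-1, by ring⟩

end SixAux

/-- Every cellular mod-2 `(N-1)`-cycle `A` in the unit grid of `ℝ^N` is
orientable: there is a cellular integral `(N-1)`-cycle `R` with coefficients in `{-1,0,1}`
whose mod-2 reduction is `A` and whose support equals the support of `A`. -/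
theorem codimension_one_orientable (N : ℕ) (hN : 2 ≤ N) (A : Finset (CellIdx N))
    (hA : IsCellCycle₂ N (N - 1) A) :
    ∃ R : CChain N, IsCellChain N (N - 1) R ∧ cbd N R = 0 ∧
      (∀ c : CellIdx N, R c = -1 ∨ R c = 0 ∨ R c = 1) ∧
      (∀ c : CellIdx N, Odd (R c) ↔ c ∈ A) ∧
      (⋃ c ∈ R.support, gridCell N c.1 c.2) = ⋃ c ∈ A, gridCell N c.1 c.2 := by
  classical
  have hz : 0 < N := by omega
  refine ⟨SixAux.R A ⟨0, hz⟩, ?_, SixAux.cbd_R hN A hA ⟨0, hz⟩,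
    fun c => SixAux.R_vals hN A hA ⟨0, hz⟩ c,
    fun c => SixAux.R_odd hN A hA ⟨0, hz⟩ c, ?_⟩
  · intro c hc
    rw [SixAux.R_support hN A hA ⟨0, hz⟩] at hc
    exact hA.1 c hc
  · rw [SixAux.R_support hN A hA ⟨0, hz⟩]

end
end

section
/- Let W ⊆ ℝ^N be an open set and define w(x) = max{√N, d(x, ℝ^N∖W)} for x ∈ ℝ^N. Then there exists a countable collection T of closed dyadic cubes of side length at least 1 (cubes of the form 2^k·(m + [0,1]^N) with k ≥ 0 an integer and m ∈ ℤ^N) such that the cubes in T have pairwise disjoint interiors, their union is all of ℝ^N, and every D ∈ T satisfies w(x)/4 ≤ diam D ≤ w(x) for every x ∈ D. In particular, any two cubes of T that intersect have diameters within a factor of 4 of each other. -/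
open MeasureTheory Metric Set
open scoped ENNReal NNReal

noncomputable section

/-- The Whitney weight `w(x) = max (√N) (d(x, ℝ^N \ W))`. -/
def whitneyWeight (N : ℕ) (W : Set (Euc N)) (x : Euc N) : ℝ :=
  max (Real.sqrt N) (Metric.infDist x Wᶜ)

/-- The closed dyadic cube `2^k (m + [0,1]^N)` of side length `2^k ≥ 1`. -/
def dyadicCube (N : ℕ) (k : ℕ) (m : Fin N → ℤ) : Set (Euc N) :=
  {y | ∀ i, (2 : ℝ) ^ k * (m i : ℝ) ≤ y i ∧ y i ≤ (2 : ℝ) ^ k * ((m i : ℝ) + 1)}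

namespace CW
variable {N : ℕ}


variable {N : ℕ}

lemma mem_cube {k : ℕ} {m : Fin N → ℤ} {y : Euc N} :
    y ∈ dyadicCube N k m ↔ ∀ i, (2:ℝ)^k * (m i : ℝ) ≤ y i ∧ y i ≤ (2:ℝ)^k * ((m i : ℝ) + 1) :=
  Iff.rfl

/-- parent index -/
def par (m : Fin N → ℤ) : Fin N → ℤ := fun i => m i / 2

lemma parent_bounds {k : ℕ} (m : Fin N → ℤ) (i : Fin N) :
    (2:ℝ)^(k+1) * ((par m i : ℤ) : ℝ) ≤ 2^k * (m i : ℝ) ∧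
    (2:ℝ)^k * ((m i : ℝ) + 1) ≤ 2^(k+1) * (((par m i : ℤ) : ℝ) + 1) := by
  have ha : (2 * (m i / 2) : ℤ) ≤ m i := by omega
  have hb : (m i : ℤ) ≤ 2 * (m i / 2) + 1 := by omega
  have ha' : (2 * ((m i / 2 : ℤ) : ℝ)) ≤ (m i : ℝ) := by exact_mod_cast ha
  have hb' : ((m i : ℤ) : ℝ) ≤ 2 * ((m i / 2 : ℤ) : ℝ) + 1 := by exact_mod_cast hb
  have hp : (0:ℝ) < 2 ^ k := by positivity
  constructor
  · simp only [par, pow_succ]; nlinarith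
  · simp only [par, pow_succ]; nlinarith

lemma subset_parent {k : ℕ} {m : Fin N → ℤ} :
    dyadicCube N k m ⊆ dyadicCube N (k+1) (par m) := by
  intro y hy i
  obtain ⟨h1, h2⟩ := hy i
  have ha : (2 * (m i / 2) : ℤ) ≤ m i := by omega
  have hb : (m i : ℤ) ≤ 2 * (m i / 2) + 1 := by omega
  have ha' : (2 * ((m i / 2 : ℤ) : ℝ)) ≤ (m i : ℝ) := by exact_mod_cast ha
  have hb' : ((m i : ℤ) : ℝ) ≤ 2 * ((m i / 2 : ℤ) : ℝ) + 1 := by exact_mod_cast hb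
  have hp : (0:ℝ) < 2 ^ k := by positivity
  constructor
  · have : (2:ℝ)^(k+1) * ((par m i : ℤ) : ℝ) ≤ (2:ℝ)^k * (m i : ℝ) := by
      simp only [par, pow_succ]
      nlinarith
    linarith
  · have : (2:ℝ)^k * ((m i : ℝ) + 1) ≤ (2:ℝ)^(k+1) * (((par m i : ℤ) : ℝ) + 1) := by
      simp only [par, pow_succ]
      nlinarith
    linarith

lemma interior_strict {k : ℕ} {m : Fin N → ℤ} {z : Euc N}
    (hz : z ∈ interior (dyadicCube N k m)) :
    ∀ i, (2:ℝ)^k * (m i : ℝ) < z i ∧ z i < (2:ℝ)^k * ((m i : ℝ) + 1) := by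
  rw [mem_interior_iff_mem_nhds, Metric.mem_nhds_iff] at hz
  obtain ⟨ε, hε, hball⟩ := hz
  intro i
  have hsingle : ∀ (c : ℝ), dist (z + c • (EuclideanSpace.single i (1:ℝ))) z = |c| := by
    intro c
    rw [dist_eq_norm]
    simp [norm_smul]
  constructor
  · have hu : z + (-(ε/2)) • (EuclideanSpace.single i (1:ℝ)) ∈ dyadicCube N k m := by
      apply hball
      rw [Metric.mem_ball, hsingle]
      rw [abs_neg, abs_of_pos (by linarith)]; linarith
    have := (hu i).1
    have happ : (z + (-(ε/2)) • (EuclideanSpace.single i (1:ℝ))) i = z i - ε/2 := by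
      simp [EuclideanSpace.single_apply]
      ring
    rw [happ] at this
    linarith
  · have hu : z + (ε/2) • (EuclideanSpace.single i (1:ℝ)) ∈ dyadicCube N k m := by
      apply hball
      rw [Metric.mem_ball, hsingle]
      rw [abs_of_pos (by linarith)]; linarith
    have := (hu i).2
    have happ : (z + (ε/2) • (EuclideanSpace.single i (1:ℝ))) i = z i + ε/2 := by
      simp [EuclideanSpace.single_apply]
    rw [happ] at this
    linarith

lemma nest {k d : ℕ} {m m' : Fin N → ℤ} {z : Euc N}
    (hz : ∀ i, (2:ℝ)^k * (m i : ℝ) < z i ∧ z i < (2:ℝ)^k * ((m i : ℝ) + 1))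
    (hz' : ∀ i, (2:ℝ)^(k+d) * (m' i : ℝ) < z i ∧ z i < (2:ℝ)^(k+d) * ((m' i : ℝ) + 1)) :
    dyadicCube N k m ⊆ dyadicCube N (k+d) m' := by
  intro y hy i
  obtain ⟨h1, h2⟩ := hz i
  obtain ⟨h1', h2'⟩ := hz' i
  have hp : (0:ℝ) < 2 ^ k := by positivity
  -- h1' and h2 : 2^(k+d) m' < 2^k (m+1), so 2^d m' < m + 1, so 2^d m' ≤ m.
  have key1 : ((2^d * m' i : ℤ) : ℝ) < (m i : ℝ) + 1 := by
    have : (2:ℝ)^(k+d) * (m' i : ℝ) < (2:ℝ)^k * ((m i : ℝ) + 1) := lt_trans h1' h2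
    rw [pow_add] at this
    push_cast
    nlinarith
  have key1' : (2^d * m' i : ℤ) ≤ m i := by
    have : (2^d * m' i : ℤ) < m i + 1 := by exact_mod_cast key1
    omega
  have key2 : (m i : ℝ) < ((2^d * (m' i + 1) : ℤ) : ℝ) := by
    have : (2:ℝ)^k * (m i : ℝ) < (2:ℝ)^(k+d) * ((m' i : ℝ) + 1) := lt_trans h1 h2'
    rw [pow_add] at this
    push_cast
    nlinarith
  have key2' : m i + 1 ≤ (2^d * (m' i + 1) : ℤ) := by
    have : (m i : ℤ) < 2^d * (m' i + 1) := by exact_mod_cast key2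
    omega
  obtain ⟨g1, g2⟩ := hy i
  constructor
  · have : (2:ℝ)^(k+d) * (m' i : ℝ) ≤ (2:ℝ)^k * (m i : ℝ) := by
      rw [pow_add]
      have : ((2^d * m' i : ℤ) : ℝ) ≤ (m i : ℝ) := by exact_mod_cast key1'
      push_cast at this ⊢
      nlinarith
    linarith
  · have : (2:ℝ)^k * ((m i : ℝ) + 1) ≤ (2:ℝ)^(k+d) * ((m' i : ℝ) + 1) := by
      rw [pow_add]
      have : ((m i : ℝ) + 1) ≤ ((2^d * (m' i + 1) : ℤ) : ℝ) := by exact_mod_cast key2'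
      push_cast at this ⊢
      nlinarith
    linarith



lemma dist_le_of_mem {k : ℕ} {m : Fin N → ℤ} {y y' : Euc N}
    (hy : y ∈ dyadicCube N k m) (hy' : y' ∈ dyadicCube N k m) :
    dist y y' ≤ 2^k * Real.sqrt N := by
  rw [EuclideanSpace.dist_eq]
  have hbd : ∀ i, dist (y i) (y' i) ^ 2 ≤ ((2:ℝ)^k)^2 := by
    intro i
    obtain ⟨a1, a2⟩ := hy i
    obtain ⟨b1, b2⟩ := hy' i
    have habs : |y i - y' i| ≤ (2:ℝ)^k := by
      rw [abs_le]; constructor <;> nlinarith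
    have h0 : (0:ℝ) ≤ |y i - y' i| := abs_nonneg _
    rw [Real.dist_eq]
    nlinarith
  calc Real.sqrt (∑ i, dist (y i) (y' i) ^ 2)
      ≤ Real.sqrt (∑ _i : Fin N, ((2:ℝ)^k)^2) :=
        Real.sqrt_le_sqrt (Finset.sum_le_sum fun i _ => hbd i)
    _ = 2^k * Real.sqrt N := by
        rw [Finset.sum_const, Finset.card_univ, Fintype.card_fin, nsmul_eq_mul]
        rw [Real.sqrt_mul (by positivity), Real.sqrt_sq (by positivity)]
        ring

lemma isBounded_cube {k : ℕ} {m : Fin N → ℤ} : Bornology.IsBounded (dyadicCube N k m) :=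
  Metric.isBounded_iff.2 ⟨2^k * Real.sqrt N, fun _ hx _ hy => dist_le_of_mem hx hy⟩

lemma diam_cube (hN : 1 ≤ N) {k : ℕ} {m : Fin N → ℤ} :
    Metric.diam (dyadicCube N k m) = 2^k * Real.sqrt N := by
  apply le_antisymm
  · exact Metric.diam_le_of_forall_dist_le (by positivity)
      (fun x hx y hy => dist_le_of_mem hx hy)
  · obtain ⟨p, hp⟩ : ∃ p : Euc N, ∀ i, p i = 2^k * (m i : ℝ) :=
      ⟨(WithLp.toLp 2 (fun i => 2^k * (m i : ℝ)) : Euc N), fun i => rfl⟩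
    obtain ⟨q, hq⟩ : ∃ q : Euc N, ∀ i, q i = 2^k * ((m i : ℝ) + 1) :=
      ⟨(WithLp.toLp 2 (fun i => 2^k * ((m i : ℝ) + 1)) : Euc N), fun i => rfl⟩
    have hpm : p ∈ dyadicCube N k m := by
      intro i; rw [hp i]
      exact ⟨le_refl _, by nlinarith [pow_pos (show (0:ℝ) < 2 by norm_num) k]⟩
    have hqm : q ∈ dyadicCube N k m := by
      intro i; rw [hq i]
      exact ⟨by nlinarith [pow_pos (show (0:ℝ) < 2 by norm_num) k], le_refl _⟩
    have hd : dist p q = 2^k * Real.sqrt N := by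
      rw [EuclideanSpace.dist_eq]
      have hco : ∀ i : Fin N, dist (p i) (q i) ^ 2 = ((2:ℝ)^k)^2 := by
        intro i
        rw [hp i, hq i, Real.dist_eq,
          show (2:ℝ)^k * (m i : ℝ) - (2:ℝ)^k * ((m i : ℝ) + 1) = -(2^k) by ring,
          abs_neg, abs_of_pos (by positivity)]
      rw [Finset.sum_congr rfl (fun i _ => hco i), Finset.sum_const, Finset.card_univ,
        Fintype.card_fin, nsmul_eq_mul, Real.sqrt_mul (by positivity),
        Real.sqrt_sq (by positivity)]
      ring
    rw [← hd]
    exact Metric.dist_le_diam_of_mem isBounded_cube hpm hqm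

lemma sqrt_le_w {W : Set (Euc N)} (x : Euc N) : Real.sqrt N ≤ whitneyWeight N W x :=
  le_max_left _ _

lemma w_lip {W : Set (Euc N)} (x y : Euc N) :
    whitneyWeight N W x ≤ whitneyWeight N W y + dist x y := by
  unfold whitneyWeight
  apply max_le
  · calc Real.sqrt N ≤ max (Real.sqrt N) (Metric.infDist y Wᶜ) := le_max_left _ _
      _ ≤ _ := le_add_of_nonneg_right dist_nonneg
  · calc Metric.infDist x Wᶜ ≤ Metric.infDist y Wᶜ + dist x y :=
        Metric.infDist_le_infDist_add_dist
      _ ≤ _ := by gcongr; exact le_max_right _ _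

lemma floor_mem_cube (k : ℕ) (x : Euc N) :
    x ∈ dyadicCube N k (fun i => ⌊x i / 2^k⌋) := by
  intro i
  have hp : (0:ℝ) < 2^k := by positivity
  have e1 : (2:ℝ)^k * (x i / 2^k) = x i := by
    field_simp
  constructor
  · show (2:ℝ)^k * (⌊x i / 2^k⌋ : ℝ) ≤ x i
    calc (2:ℝ)^k * (⌊x i / 2^k⌋ : ℝ) ≤ 2^k * (x i / 2^k) :=
        mul_le_mul_of_nonneg_left (Int.floor_le _) (le_of_lt hp)
      _ = x i := e1
  · show x i ≤ (2:ℝ)^k * ((⌊x i / 2^k⌋ : ℝ) + 1)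
    calc x i = 2^k * (x i / 2^k) := e1.symm
      _ ≤ 2^k * ((⌊x i / 2^k⌋ : ℝ) + 1) :=
        mul_le_mul_of_nonneg_left (le_of_lt (Int.lt_floor_add_one _)) (le_of_lt hp)

lemma floor_half (t : ℝ) : ⌊t / 2⌋ = ⌊t⌋ / 2 := by
  rw [Int.floor_eq_iff]
  constructor
  · have h1 : (2 * (⌊t⌋ / 2) : ℤ) ≤ ⌊t⌋ := by omega
    have h2 : ((2 * (⌊t⌋ / 2) : ℤ) : ℝ) ≤ (⌊t⌋ : ℝ) := by exact_mod_cast h1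
    have h3 := Int.floor_le t
    push_cast at h2 ⊢
    linarith
  · have h1 : (⌊t⌋ : ℤ) ≤ 2 * (⌊t⌋ / 2) + 1 := by omega
    have h2 : ((⌊t⌋ : ℤ) : ℝ) ≤ ((2 * (⌊t⌋ / 2) + 1 : ℤ) : ℝ) := by exact_mod_cast h1
    have h3 := Int.lt_floor_add_one t
    push_cast at h2 ⊢
    linarith

lemma floor_succ (k : ℕ) (x : Euc N) (i : Fin N) :
    ⌊x i / 2^(k+1)⌋ = ⌊x i / 2^k⌋ / 2 := by
  rw [← floor_half]
  congr 1
  rw [pow_succ]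
  ring


/-- strict coordinates pass to the parent cube -/
lemma strict_parent {k : ℕ} {m : Fin N → ℤ} {z : Euc N}
    (hz : ∀ i, (2:ℝ)^k * (m i : ℝ) < z i ∧ z i < (2:ℝ)^k * ((m i : ℝ) + 1)) :
    ∀ i, (2:ℝ)^(k+1) * ((par m i : ℤ) : ℝ) < z i ∧
      z i < (2:ℝ)^(k+1) * (((par m i : ℤ) : ℝ) + 1) := by
  intro i
  obtain ⟨h1, h2⟩ := hz i
  obtain ⟨p1, p2⟩ := parent_bounds m i
  exact ⟨lt_of_le_of_lt p1 h1, lt_of_lt_of_le h2 p2⟩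

def good (N : ℕ) (W : Set (Euc N)) (k : ℕ) (m : Fin N → ℤ) : Prop :=
  ∀ y ∈ dyadicCube N k m, 2^k * Real.sqrt N ≤ whitneyWeight N W y

def sel (N : ℕ) (W : Set (Euc N)) (k : ℕ) (m : Fin N → ℤ) : Prop :=
  good N W k m ∧ ¬ good N W (k+1) (par m)

lemma sqrtN_pos (hN : 1 ≤ N) : (0:ℝ) < Real.sqrt N := by
  apply Real.sqrt_pos.2
  exact_mod_cast Nat.lt_of_lt_of_le Nat.zero_lt_one hN

/-- two selected cubes whose interiors meet are equal (case k ≤ k') -/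
lemma sel_eq_of_le {W : Set (Euc N)} (hN : 1 ≤ N) {k k' : ℕ} {m m' : Fin N → ℤ}
    (h : sel N W k m) (h' : sel N W k' m') (hkk : k ≤ k') {z : Euc N}
    (hz : z ∈ interior (dyadicCube N k m)) (hz' : z ∈ interior (dyadicCube N k' m')) :
    dyadicCube N k m = dyadicCube N k' m' := by
  have s := interior_strict hz
  have s' := interior_strict hz'
  rcases eq_or_lt_of_le hkk with heq | hlt
  · subst heq
    have h1 : dyadicCube N k m ⊆ dyadicCube N (k+0) m' := nest s (by simpa using s')
    have h2 : dyadicCube N k m' ⊆ dyadicCube N (k+0) m := nest s' (by simpa using s)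
    simp only [Nat.add_zero] at h1 h2
    exact Subset.antisymm h1 h2
  · exfalso
    apply h.2
    have hd : (k+1) + (k' - (k+1)) = k' := by omega
    have sp := strict_parent s
    have hsub : dyadicCube N (k+1) (par m) ⊆ dyadicCube N k' m' := by
      have := nest (k := k+1) (d := k' - (k+1)) sp (by rw [hd]; exact s')
      rwa [hd] at this
    intro y hy
    have hw := h'.1 y (hsub hy)
    have hmono : (2:ℝ)^(k+1) ≤ 2^k' := by
      apply pow_le_pow_right₀ (by norm_num)
      omega
    have := sqrtN_pos hN
    nlinarith


end CW

/-- coarse Whitney cubulation.  For every open `W ⊆ ℝ^N` there is a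
countable collection of closed dyadic cubes of side at least `1` with pairwise disjoint
interiors covering `ℝ^N`, each cube `D` satisfying `w(x)/4 ≤ diam D ≤ w(x)` for all
`x ∈ D`; in particular, intersecting cubes have comparable diameters. -/
theorem coarse_whitney_cubulation (N : ℕ) (hN : 1 ≤ N) (W : Set (Euc N)) (hW : IsOpen W) :
    ∃ T : Set (Set (Euc N)), T.Countable ∧
      (∀ D ∈ T, ∃ (k : ℕ) (m : Fin N → ℤ), D = dyadicCube N k m) ∧
      (∀ D ∈ T, ∀ D' ∈ T, D ≠ D' → interior D ∩ interior D' = ∅) ∧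
      ⋃₀ T = Set.univ ∧
      (∀ D ∈ T, ∀ x ∈ D,
        whitneyWeight N W x / 4 ≤ Metric.diam D ∧ Metric.diam D ≤ whitneyWeight N W x) ∧
      (∀ D ∈ T, ∀ D' ∈ T, (D ∩ D').Nonempty → Metric.diam D ≤ 4 * Metric.diam D') := by
  classical
  set T : Set (Set (Euc N)) :=
    (fun p : ℕ × (Fin N → ℤ) => dyadicCube N p.1 p.2) '' {p | CW.sel N W p.1 p.2} with hT
  have hsqrt := CW.sqrtN_pos hN
  -- the two-sided diameter estimate, proved once
  have key : ∀ k m, CW.sel N W k m → ∀ x ∈ dyadicCube N k m,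
      whitneyWeight N W x / 4 ≤ Metric.diam (dyadicCube N k m) ∧
      Metric.diam (dyadicCube N k m) ≤ whitneyWeight N W x := by
    intro k m hsel x hx
    rw [CW.diam_cube hN]
    constructor
    · -- lower bound from failure of parent
      have hpar' : ∃ y ∈ dyadicCube N (k+1) (CW.par m),
          whitneyWeight N W y < 2^(k+1) * Real.sqrt N := by
        simpa [CW.good, not_forall, not_le] using hsel.2
      obtain ⟨y, hy, hwy⟩ := hpar'
      have hdxy : dist x y ≤ 2^(k+1) * Real.sqrt N := by
        rw [← CW.diam_cube hN]
        exact Metric.dist_le_diam_of_mem CW.isBounded_cube (CW.subset_parent hx) hy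
      have hlip := CW.w_lip (W := W) x y
      have hps : (2:ℝ)^(k+1) = 2 * 2^k := by rw [pow_succ]; ring
      rw [hps] at hdxy hwy
      linarith
    · exact hsel.1 x hx
  refine ⟨T, ?_, ?_, ?_, ?_, ?_, ?_⟩
  · exact (Set.to_countable _).image _
  · rintro D ⟨⟨k, m⟩, hsel, rfl⟩
    exact ⟨k, m, rfl⟩
  · rintro D ⟨⟨k, m⟩, hsel, rfl⟩ D' ⟨⟨k', m'⟩, hsel', rfl⟩ hne
    by_contra hcon
    obtain ⟨z, hz, hz'⟩ := Set.nonempty_iff_ne_empty.2 hcon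
    rcases le_total k k' with hle | hle
    · exact hne (CW.sel_eq_of_le hN hsel hsel' hle hz hz')
    · exact hne (CW.sel_eq_of_le hN hsel' hsel hle hz' hz).symm
  · -- covering
    apply Set.eq_univ_of_forall
    intro x
    set P : ℕ → Prop := fun k => CW.good N W k (fun i => ⌊x i / 2^k⌋) with hP
    have hP0 : P 0 := by
      intro y hy
      simpa using CW.sqrt_le_w (W := W) y
    have hex : ∃ j, ¬ P (j + 1) := by
      obtain ⟨n, hn⟩ := pow_unbounded_of_one_lt (whitneyWeight N W x / Real.sqrt N)
        (show (1:ℝ) < 2 by norm_num)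
      have hnP : ¬ P n := by
        intro hgood
        have := hgood x (CW.floor_mem_cube n x)
        rw [div_lt_iff₀ hsqrt] at hn
        linarith
      cases n with
      | zero => exact absurd hP0 hnP
      | succ j => exact ⟨j, hnP⟩
    set k₀ := Nat.find hex with hk₀
    have hnotP : ¬ P (k₀ + 1) := Nat.find_spec hex
    have hPk₀ : P k₀ := by
      cases' Nat.eq_zero_or_pos k₀ with h0 hpos
      · rw [h0]; exact hP0
      · obtain ⟨j, hj⟩ := Nat.exists_eq_succ_of_ne_zero (Nat.pos_iff_ne_zero.1 hpos)
        have := Nat.find_min hex (by omega : j < k₀)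
        rw [hj]
        exact not_not.1 this
    have hpar : CW.par (fun i => ⌊x i / 2^k₀⌋) = fun i => ⌊x i / 2^(k₀+1)⌋ := by
      funext i
      rw [CW.floor_succ]
      rfl
    refine ⟨dyadicCube N k₀ (fun i => ⌊x i / 2^k₀⌋), ⟨(k₀, fun i => ⌊x i / 2^k₀⌋), ?_, rfl⟩,
      CW.floor_mem_cube k₀ x⟩
    refine ⟨hPk₀, ?_⟩
    rw [hpar]
    exact hnotP
  · rintro D ⟨⟨k, m⟩, hsel, rfl⟩ x hx
    exact key k m hsel x hx
  · rintro D ⟨⟨k, m⟩, hsel, rfl⟩ D' ⟨⟨k', m'⟩, hsel', rfl⟩ ⟨x, hx, hx'⟩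
    have h1 := (key k m hsel x hx).2
    have h2 := (key k' m' hsel' x hx').1
    linarith
end
end

section
/- Let E ⊆ ℝ^N be Ahlfors d-regular with constant c, let Q ⊆ E, let i ∈ ℤ with 2^i < diam E, and suppose C > 1 is such that H^d(∂Q(t·2^i)) ≤ C·t^{1/C}·2^{id} for all t > 0. Then there is a constant C₁ depending only on d, N, and c such that for every 0 < t < 1, the relative boundary ∂Q can be covered by at most C₁·C·t^{1/C − d} balls of radius t·2^i. -/
open MeasureTheory Metric Set
open scoped ENNReal NNReal

noncomputable section

/-- `E ⊆ ℝ^N` is Ahlfors `d`-regular with constant `c`. -/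
def AhlforsRegular (N d : ℕ) (c : ℝ) (E : Set (Euc N)) : Prop :=
  IsClosed E ∧ ∀ x ∈ E, ∀ r : ℝ, 0 < r → ENNReal.ofReal r < EMetric.diam E →
    ENNReal.ofReal (c⁻¹ * r ^ d) ≤ μH[(d : ℝ)] (E ∩ closedBall x r) ∧
      μH[(d : ℝ)] (E ∩ closedBall x r) ≤ ENNReal.ofReal (c * r ^ d)

/-- `E ⊆ ℝ^N` is uniformly `d`-rectifiable with constant `c` (Ahlfors regularity together
with big pieces of Lipschitz images). -/
def UniformlyRectifiable (N d : ℕ) (c : ℝ) (E : Set (Euc N)) : Prop :=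
  AhlforsRegular N d c E ∧
  ∀ x ∈ E, ∀ r : ℝ, 0 < r → ENNReal.ofReal r < EMetric.diam E →
    ∃ f : Euc d → Euc N, LipschitzWith (Real.toNNReal c) f ∧
      ENNReal.ofReal (c⁻¹ * r ^ d) ≤ μH[(d : ℝ)] (f '' closedBall 0 r ∩ E ∩ closedBall x r)

/-- The relative `ρ`-boundary neighborhood `∂Q(ρ)` of `Q ⊆ E`. -/
def bdryNbhd (N : ℕ) (E Q : Set (Euc N)) (ρ : ℝ) : Set (Euc N) :=
  {x ∈ Q | EMetric.infEdist x (E \ Q) ≤ ENNReal.ofReal ρ} ∪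
    {x ∈ E \ Q | EMetric.infEdist x Q ≤ ENNReal.ofReal ρ}

/-- The boundary of `Q` relative to `E`: the intersection of the closures of `Q` and of
`E \ Q`. -/
def relBd (N : ℕ) (E Q : Set (Euc N)) : Set (Euc N) := closure Q ∩ closure (E \ Q)

/-- Let `E` be Ahlfors `d`-regular with constant `c`, let `Q ⊆ E`, let
`2^i < diam E`, and suppose `C > 1` satisfies `H^d(∂Q(t·2^i)) ≤ C t^{1/C} 2^{id}` for all
`t > 0`.  Then there is a constant `C₁` depending only on `d`, `N`, `c` such that for every
`0 < t < 1` the relative boundary `∂Q` can be covered by at most `C₁ C t^{1/C - d}` balls of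
radius `t·2^i`. -/
theorem pseudocube_boundary_covering (d N : ℕ) (c : ℝ) (hc : 1 ≤ c) :
    ∃ C₁ : ℝ, 0 < C₁ ∧
      ∀ (E Q : Set (Euc N)) (i : ℤ) (C : ℝ),
        AhlforsRegular N d c E → Q ⊆ E →
        ENNReal.ofReal ((2 : ℝ) ^ i) < EMetric.diam E → 1 < C →
        (∀ t : ℝ, 0 < t →
          μH[(d : ℝ)] (bdryNbhd N E Q (t * (2 : ℝ) ^ i)) ≤
            ENNReal.ofReal (C * t ^ ((1 : ℝ) / C) * (2 : ℝ) ^ ((d : ℤ) * i))) →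
        ∀ t : ℝ, 0 < t → t < 1 →
          ∃ F : Finset (Euc N),
            (F.card : ℝ) ≤ C₁ * C * t ^ ((1 : ℝ) / C - d) ∧
            relBd N E Q ⊆ ⋃ y ∈ F, closedBall y (t * (2 : ℝ) ^ i) := by
  classical
  refine ⟨3 ^ d * c, by positivity, ?_⟩
  intro E Q i C hE hQE hdiam hC hbd t ht ht1
  obtain ⟨hEclosed, hreg⟩ := hE
  set r : ℝ := t * (2 : ℝ) ^ i with hrdef
  have h2i : (0 : ℝ) < (2 : ℝ) ^ i := by positivity
  have hrpos : 0 < r := by positivity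
  have hcpos : (0 : ℝ) < c := lt_of_lt_of_le one_pos hc
  -- relBd ⊆ E
  have hbdE : relBd N E Q ⊆ E := fun x hx => by
    have : closure Q ⊆ E := hEclosed.closure_subset_iff.mpr hQE
    exact this hx.1
  -- points of E near relBd are in bdryNbhd r
  have hnear : ∀ y ∈ relBd N E Q, ∀ z ∈ E, dist z y ≤ r / 3 →
      z ∈ bdryNbhd N E Q r := by
    intro y hy z hzE hdz
    have hedz : edist z y ≤ ENNReal.ofReal r := by
      rw [edist_dist]
      exact ENNReal.ofReal_le_ofReal (le_trans hdz (by linarith))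
    by_cases hzQ : z ∈ Q
    · left
      refine ⟨hzQ, ?_⟩
      have h0 : EMetric.infEdist y (E \ Q) = 0 :=
        EMetric.mem_closure_iff_infEdist_zero.mp hy.2
      calc EMetric.infEdist z (E \ Q) ≤ edist z y + EMetric.infEdist y (E \ Q) :=
            EMetric.infEdist_le_edist_add_infEdist
        _ = edist z y := by rw [h0, add_zero]
        _ ≤ ENNReal.ofReal r := hedz
    · right
      refine ⟨⟨hzE, hzQ⟩, ?_⟩
      have h0 : EMetric.infEdist y Q = 0 :=
        EMetric.mem_closure_iff_infEdist_zero.mp hy.1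
      calc EMetric.infEdist z Q ≤ edist z y + EMetric.infEdist y Q :=
            EMetric.infEdist_le_edist_add_infEdist
        _ = edist z y := by rw [h0, add_zero]
        _ ≤ ENNReal.ofReal r := hedz
  -- separated sets in relBd have bounded cardinality
  have key : ∀ F : Finset (Euc N), (↑F : Set (Euc N)) ⊆ relBd N E Q →
      (∀ x ∈ F, ∀ y ∈ F, x ≠ y → r ≤ dist x y) →
      (F.card : ℝ) ≤ 3 ^ d * c * C * t ^ ((1 : ℝ) / C - d) := by
    intro F hFsub hFsep
    have hdiam3 : ENNReal.ofReal (r / 3) < EMetric.diam E := by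
      refine lt_of_le_of_lt (ENNReal.ofReal_le_ofReal ?_) hdiam
      nlinarith
    have hr3 : (0 : ℝ) < r / 3 := by linarith
    -- lower bound on each ball
    have hlow : ∀ y ∈ F, ENNReal.ofReal (c⁻¹ * (r / 3) ^ d) ≤
        μH[(d : ℝ)] (E ∩ closedBall y (r / 3)) := by
      intro y hy
      exact (hreg y (hbdE (hFsub hy)) (r / 3) hr3 hdiam3).1
    -- disjointness
    have hdisj : (↑F : Set (Euc N)).PairwiseDisjoint
        (fun y => E ∩ closedBall y (r / 3)) := by
      intro x hx y hy hxy
      refine Set.disjoint_left.mpr fun z hzx hzy => ?_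
      have h1 : dist z x ≤ r / 3 := hzx.2
      have h2 : dist z y ≤ r / 3 := hzy.2
      have := hFsep x hx y hy hxy
      have : dist x y ≤ 2 * (r / 3) := by
        calc dist x y ≤ dist x z + dist z y := dist_triangle x z y
          _ = dist z x + dist z y := by rw [dist_comm z x]
          _ ≤ r / 3 + r / 3 := add_le_add h1 h2
          _ = 2 * (r / 3) := by ring
      linarith [hFsep x hx y hy hxy]
    have hmeas : ∀ y ∈ F, MeasurableSet (E ∩ closedBall y (r / 3)) :=
      fun y _ => (hEclosed.inter Metric.isClosed_closedBall).measurableSet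
    have hsum : μH[(d : ℝ)] (⋃ y ∈ F, E ∩ closedBall y (r / 3)) =
        ∑ y ∈ F, μH[(d : ℝ)] (E ∩ closedBall y (r / 3)) :=
      measure_biUnion_finset hdisj hmeas
    have hsubU : (⋃ y ∈ F, E ∩ closedBall y (r / 3)) ⊆ bdryNbhd N E Q r := by
      intro z hz
      simp only [Set.mem_iUnion] at hz
      obtain ⟨y, hyF, hzE, hzB⟩ := hz
      exact hnear y (hFsub hyF) z hzE hzB
    have hmain : (F.card : ℝ≥0∞) * ENNReal.ofReal (c⁻¹ * (r / 3) ^ d) ≤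
        ENNReal.ofReal (C * t ^ ((1 : ℝ) / C) * (2 : ℝ) ^ ((d : ℤ) * i)) := by
      calc (F.card : ℝ≥0∞) * ENNReal.ofReal (c⁻¹ * (r / 3) ^ d)
          = F.card • ENNReal.ofReal (c⁻¹ * (r / 3) ^ d) := by
            rw [nsmul_eq_mul]
        _ ≤ ∑ y ∈ F, μH[(d : ℝ)] (E ∩ closedBall y (r / 3)) :=
            Finset.card_nsmul_le_sum F _ _ hlow
        _ = μH[(d : ℝ)] (⋃ y ∈ F, E ∩ closedBall y (r / 3)) := hsum.symm
        _ ≤ μH[(d : ℝ)] (bdryNbhd N E Q r) := measure_mono hsubU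
        _ ≤ _ := hbd t ht
    -- convert to reals
    have hreal : (F.card : ℝ) * (c⁻¹ * (r / 3) ^ d) ≤
        C * t ^ ((1 : ℝ) / C) * (2 : ℝ) ^ ((d : ℤ) * i) := by
      have h1 : ENNReal.ofReal ((F.card : ℝ) * (c⁻¹ * (r / 3) ^ d)) ≤
          ENNReal.ofReal (C * t ^ ((1 : ℝ) / C) * (2 : ℝ) ^ ((d : ℤ) * i)) := by
        rw [ENNReal.ofReal_mul (by positivity), ENNReal.ofReal_natCast]
        exact hmain
      have hrhs : (0 : ℝ) ≤ C * t ^ ((1 : ℝ) / C) * (2 : ℝ) ^ ((d : ℤ) * i) := by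
        have : (0:ℝ) < C := lt_trans one_pos hC
        positivity
      exact (ENNReal.ofReal_le_ofReal_iff hrhs).mp h1
    -- algebra
    have hP : (2 : ℝ) ^ ((d : ℤ) * i) = ((2 : ℝ) ^ i) ^ d := by
      rw [mul_comm, zpow_mul, zpow_natCast]
    have htpow : t ^ ((1 : ℝ) / C - d) = t ^ ((1 : ℝ) / C) / t ^ d := by
      rw [Real.rpow_sub ht, Real.rpow_natCast]
    rw [htpow]
    have htd : (0 : ℝ) < t ^ d := by positivity
    have hPd : (0 : ℝ) < ((2 : ℝ) ^ i) ^ d := by positivity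
    have ha : (0 : ℝ) < t ^ ((1 : ℝ) / C) := Real.rpow_pos_of_pos ht _
    rw [hP] at hreal
    have hr3d : (r / 3) ^ d = t ^ d * ((2 : ℝ) ^ i) ^ d / 3 ^ d := by
      rw [hrdef]
      rw [div_pow, mul_pow]
    rw [hr3d] at hreal
    rw [mul_div_assoc', le_div_iff₀ htd]
    have hc0 : c ≠ 0 := ne_of_gt hcpos
    have hP0 : ((2 : ℝ) ^ i) ^ d ≠ 0 := ne_of_gt hPd
    calc (F.card : ℝ) * t ^ d
        = (F.card : ℝ) * (c⁻¹ * (t ^ d * ((2 : ℝ) ^ i) ^ d / 3 ^ d)) *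
            (3 ^ d * c / ((2 : ℝ) ^ i) ^ d) := by
          field_simp
      _ ≤ C * t ^ ((1 : ℝ) / C) * ((2 : ℝ) ^ i) ^ d *
            (3 ^ d * c / ((2 : ℝ) ^ i) ^ d) :=
          mul_le_mul_of_nonneg_right hreal (by positivity)
      _ = 3 ^ d * c * C * t ^ ((1 : ℝ) / C) := by
          field_simp
  -- choose a separated set of maximal cardinality
  set M : ℝ := 3 ^ d * c * C * t ^ ((1 : ℝ) / C - d) with hM
  set S : Set ℕ := {n | ∃ F : Finset (Euc N), (↑F : Set (Euc N)) ⊆ relBd N E Q ∧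
      (∀ x ∈ F, ∀ y ∈ F, x ≠ y → r ≤ dist x y) ∧ F.card = n} with hS
  have h0S : 0 ∈ S := ⟨∅, by simp, by simp, rfl⟩
  have hSbdd : BddAbove S := by
    refine ⟨⌊M⌋₊, fun n hn => ?_⟩
    obtain ⟨F, h1, h2, h3⟩ := hn
    have := key F h1 h2
    rw [h3] at this
    exact Nat.le_floor this
  have hmem : sSup S ∈ S := Nat.sSup_mem ⟨0, h0S⟩ hSbdd
  obtain ⟨F, hFsub, hFsep, hFcard⟩ := hmem
  refine ⟨F, ?_, ?_⟩
  · have := key F hFsub hFsep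
    exact this
  · intro x hx
    by_contra hcov
    simp only [Set.mem_iUnion, Metric.mem_closedBall, not_exists, not_and,
      not_le] at hcov
    have hxF : x ∉ F := by
      intro hxF
      have := hcov x hxF
      simp at this
      linarith
    have hsep' : ∀ a ∈ insert x F, ∀ b ∈ insert x F, a ≠ b → r ≤ dist a b := by
      intro a ha b hb hab
      rcases Finset.mem_insert.mp ha with rfl | ha'
      · rcases Finset.mem_insert.mp hb with rfl | hb'
        · exact absurd rfl hab
        · exact le_of_lt (hcov b hb')
      · rcases Finset.mem_insert.mp hb with rfl | hb'
        · rw [dist_comm]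
          exact le_of_lt (hcov a ha')
        · exact hFsep a ha' b hb' hab
    have hsub' : (↑(insert x F) : Set (Euc N)) ⊆ relBd N E Q := by
      intro z hz
      simp only [Finset.coe_insert, Set.mem_insert_iff] at hz
      rcases hz with rfl | h
      · exact hx
      · exact hFsub h
    have hmem' : F.card + 1 ∈ S := by
      refine ⟨insert x F, hsub', hsep', ?_⟩
      rw [Finset.card_insert_of_notMem hxF]
    have := le_csSup hSbdd hmem'
    rw [hFcard] at this
    omega

end
end
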